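/- arXiv:2311.08384 — 6 statements merged into one kernel-verified Lean document; each statement's English description precedes it below -/
import Mathlib

section
/- Fitted policy evaluation offline Bellman residual bound: Let π be a policy of a finite discounted MDP, ν a probability distribution on S×A, λ > 0, ε ≥ 0, ε_be ∈ [0, 2/(1−γ)], and D ≥ 0. Let f_prev, f : S×A → [0, 1/(1−γ)] and suppose there exists g : S×A → [0, 1/(1−γ)] with |g(s,a) − (T^π f_prev)(s,a)| ≤ ε_be for all (s,a) such that the regression oracle inequality E_{ν}[(f − T^π f_prev)²] + λ·E_{d^π}[(f − Q^π)²] ≤ E_{ν}[(g − T^π f_prev)²] + λ·E_{d^π}[(g − Q^π)²] + ε holds, and suppose E_{d^π}[(f_prev − Q^π)²] ≤ D. Then E_{(s,a)∼ν}[(f(s,a) − (T^π f_prev)(s,a))²] ≤ λ·(4·ε_be/(1−γ) + γ·D) + 2·ε_be/(1−γ) + ε. -/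
open Finset

structure FinMDP (S A : Type*) [Fintype S] [Fintype A] where
  P : S → A → S → ℝ
  P_nonneg : ∀ s a s', 0 ≤ P s a s'
  P_sum : ∀ s a, ∑ s', P s a s' = 1
  r : S → A → ℝ
  r_nonneg : ∀ s a, 0 ≤ r s a
  r_le_one : ∀ s a, r s a ≤ 1
  disc : ℝ
  disc_pos : 0 < disc
  disc_lt_one : disc < 1
  init : S → ℝ
  init_nonneg : ∀ s, 0 ≤ init s
  init_sum : ∑ s, init s = 1

variable {S A : Type*} [Fintype S] [Fintype A] [Nonempty S] [Nonempty A]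

/-- A policy assigns to each state a probability mass function over actions. -/
def IsPolicy (π : S → A → ℝ) : Prop :=
  (∀ s a, 0 ≤ π s a) ∧ ∀ s, ∑ a, π s a = 1

/-- The Bellman operator `T^π`. -/
noncomputable def FinMDP.bellman (M : FinMDP S A) (π f : S → A → ℝ) (s : S) (a : A) : ℝ :=
  M.r s a + M.disc * ∑ s', M.P s a s' * ∑ a', π s' a' * f s' a'

/-- `Q` is the action-value function of `π`, i.e. satisfies the Bellman equation. -/
def FinMDP.IsQ (M : FinMDP S A) (π Q : S → A → ℝ) : Prop :=
  ∀ s a, Q s a = M.bellman π Q s a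

/-- The state value `V^π(s)` induced by a `Q`-function. -/
noncomputable def vOf (π Q : S → A → ℝ) (s : S) : ℝ := ∑ a, π s a * Q s a

/-- The scalar value `V^π = E_{s ∼ μ₀}[V^π(s)]`. -/
noncomputable def FinMDP.scalarV (M : FinMDP S A) (π Q : S → A → ℝ) : ℝ :=
  ∑ s, M.init s * vOf π Q s

/-- Distribution of the state at time `t` under policy `π`. -/
noncomputable def FinMDP.stateDist (M : FinMDP S A) (π : S → A → ℝ) : ℕ → S → ℝ
  | 0 => M.init
  | (t + 1) => fun s' => ∑ s, ∑ a, FinMDP.stateDist M π t s * π s a * M.P s a s'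

/-- The discounted occupancy measure `d^π(s,a) = (1-γ) ∑_t γ^t Pr^π(s_t = s, a_t = a)`. -/
noncomputable def FinMDP.occ (M : FinMDP S A) (π : S → A → ℝ) (s : S) (a : A) : ℝ :=
  (1 - M.disc) * ∑' t : ℕ, M.disc ^ t * M.stateDist π t s * π s a


section Aux
variable {S A : Type*} [Fintype S] [Fintype A] [Nonempty S] [Nonempty A]
variable (M : FinMDP S A) (π : S → A → ℝ)

lemma pi_le_one (hπ : IsPolicy π) (s : S) (a : A) : π s a ≤ 1 := by
  calc π s a ≤ ∑ a', π s a' := Finset.single_le_sum (fun a' _ => hπ.1 s a') (mem_univ a)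
  _ = 1 := hπ.2 s

lemma stateDist_nonneg (hπ : IsPolicy π) : ∀ t s, 0 ≤ M.stateDist π t s := by
  intro t
  induction t with
  | zero => exact M.init_nonneg
  | succ t ih =>
    intro s'
    refine Finset.sum_nonneg fun s _ => Finset.sum_nonneg fun a _ => ?_
    exact mul_nonneg (mul_nonneg (ih s) (hπ.1 s a)) (M.P_nonneg s a s')

lemma stateDist_sum (hπ : IsPolicy π) : ∀ t, ∑ s, M.stateDist π t s = 1 := by
  intro t
  induction t with
  | zero => exact M.init_sum
  | succ t ih =>
    show ∑ s', ∑ s, ∑ a, M.stateDist π t s * π s a * M.P s a s' = 1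
    rw [Finset.sum_comm]
    have h1 : ∀ s, ∑ s', ∑ a, M.stateDist π t s * π s a * M.P s a s'
        = M.stateDist π t s := by
      intro s
      rw [Finset.sum_comm]
      have h2 : ∀ a, ∑ s', M.stateDist π t s * π s a * M.P s a s'
          = M.stateDist π t s * π s a := by
        intro a; rw [← Finset.mul_sum, M.P_sum, mul_one]
      rw [Finset.sum_congr rfl fun a _ => h2 a, ← Finset.mul_sum, hπ.2, mul_one]
    rw [Finset.sum_congr rfl fun s _ => h1 s, ih]

lemma stateDist_le_one (hπ : IsPolicy π) (t : ℕ) (s : S) : M.stateDist π t s ≤ 1 := by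
  calc M.stateDist π t s ≤ ∑ s', M.stateDist π t s' :=
        Finset.single_le_sum (fun s' _ => stateDist_nonneg M π hπ t s') (mem_univ s)
  _ = 1 := stateDist_sum M π hπ t

lemma summable_e (hπ : IsPolicy π) (s : S) :
    Summable (fun t => M.disc ^ t * M.stateDist π t s) := by
  refine Summable.of_nonneg_of_le (fun t => ?_) (fun t => ?_)
    (summable_geometric_of_lt_one M.disc_pos.le M.disc_lt_one)
  · exact mul_nonneg (pow_nonneg M.disc_pos.le t) (stateDist_nonneg M π hπ t s)
  · calc M.disc ^ t * M.stateDist π t s ≤ M.disc ^ t * 1 :=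
          mul_le_mul_of_nonneg_left (stateDist_le_one M π hπ t s) (pow_nonneg M.disc_pos.le t)
    _ = M.disc ^ t := mul_one _

noncomputable def eFun (M : FinMDP S A) (π : S → A → ℝ) (s : S) : ℝ :=
  ∑' t : ℕ, M.disc ^ t * M.stateDist π t s

lemma occ_eq (s : S) (a : A) : M.occ π s a = (1 - M.disc) * eFun M π s * π s a := by
  rw [FinMDP.occ, eFun, mul_assoc, ← tsum_mul_right]

lemma eFun_nonneg (hπ : IsPolicy π) (s : S) : 0 ≤ eFun M π s :=
  tsum_nonneg fun t => mul_nonneg (pow_nonneg M.disc_pos.le t) (stateDist_nonneg M π hπ t s)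

lemma occ_nonneg (hπ : IsPolicy π) (s : S) (a : A) : 0 ≤ M.occ π s a := by
  rw [occ_eq]
  exact mul_nonneg (mul_nonneg (by linarith [M.disc_lt_one]) (eFun_nonneg M π hπ s)) (hπ.1 s a)

lemma eFun_sum (hπ : IsPolicy π) : ∑ s, eFun M π s = (1 - M.disc)⁻¹ := by
  unfold eFun
  rw [← Summable.tsum_finsetSum (fun s _ => summable_e M π hπ s)]
  have h : ∀ t : ℕ, ∑ s, M.disc ^ t * M.stateDist π t s = M.disc ^ t := by
    intro t; rw [← Finset.mul_sum, stateDist_sum M π hπ t, mul_one]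
  rw [tsum_congr h, tsum_geometric_of_lt_one M.disc_pos.le M.disc_lt_one]

lemma occ_sum (hπ : IsPolicy π) : ∑ s, ∑ a, M.occ π s a = 1 := by
  have h1 : ∀ s, ∑ a, M.occ π s a = (1 - M.disc) * eFun M π s := by
    intro s
    rw [Finset.sum_congr rfl fun a _ => occ_eq M π s a, ← Finset.mul_sum, hπ.2, mul_one]
  rw [Finset.sum_congr rfl fun s _ => h1 s, ← Finset.mul_sum, eFun_sum M π hπ,
    mul_inv_cancel₀ (by linarith [M.disc_lt_one])]

lemma eFun_rec (hπ : IsPolicy π) (s' : S) :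
    eFun M π s' = M.init s' + M.disc * ∑ s, eFun M π s * (∑ a, π s a * M.P s a s') := by
  have hsum : Summable (fun t => M.disc ^ t * M.stateDist π t s') := summable_e M π hπ s'
  have h0 := Summable.tsum_eq_zero_add hsum
  simp only [pow_zero, one_mul] at h0
  have hstep : ∀ t : ℕ, M.disc ^ (t + 1) * M.stateDist π (t + 1) s'
      = M.disc * ∑ s, (M.disc ^ t * M.stateDist π t s) * (∑ a, π s a * M.P s a s') := by
    intro t
    have hd : M.stateDist π (t+1) s' = ∑ s, M.stateDist π t s * ∑ a, π s a * M.P s a s' := by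
      show (∑ s, ∑ a, M.stateDist π t s * π s a * M.P s a s') = _
      refine Finset.sum_congr rfl fun s _ => ?_
      rw [Finset.mul_sum]
      exact Finset.sum_congr rfl fun a _ => by ring
    rw [hd, pow_succ, Finset.mul_sum, Finset.mul_sum]
    exact Finset.sum_congr rfl fun s _ => by ring
  have h2 : ∑' t : ℕ, M.disc ^ (t+1) * M.stateDist π (t+1) s'
      = M.disc * ∑ s, eFun M π s * (∑ a, π s a * M.P s a s') := by
    calc ∑' t : ℕ, M.disc ^ (t+1) * M.stateDist π (t+1) s'
        = ∑' t : ℕ, M.disc * ∑ s, (M.disc ^ t * M.stateDist π t s) * (∑ a, π s a * M.P s a s') :=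
          tsum_congr hstep
      _ = M.disc * ∑' t : ℕ, ∑ s, (M.disc ^ t * M.stateDist π t s) * (∑ a, π s a * M.P s a s') :=
          tsum_mul_left
      _ = M.disc * ∑ s, ∑' t : ℕ, (M.disc ^ t * M.stateDist π t s) * (∑ a, π s a * M.P s a s') := by
          rw [Summable.tsum_finsetSum (fun s _ => (summable_e M π hπ s).mul_right _)]
      _ = M.disc * ∑ s, eFun M π s * (∑ a, π s a * M.P s a s') := by
          refine congrArg _ (Finset.sum_congr rfl fun s _ => ?_)
          exact tsum_mul_right
  rw [eFun, h0, h2]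
  simp [FinMDP.stateDist]

lemma occ_flow (hπ : IsPolicy π) (s' : S) (a' : A) :
    M.disc * ∑ s, ∑ a, M.occ π s a * M.P s a s' * π s' a' ≤ M.occ π s' a' := by
  have hx : ∑ s, ∑ a, M.occ π s a * M.P s a s' * π s' a'
      = (1 - M.disc) * (∑ s, eFun M π s * (∑ a, π s a * M.P s a s')) * π s' a' := by
    simp only [occ_eq, Finset.mul_sum, Finset.sum_mul]
    refine Finset.sum_congr rfl fun s _ => ?_
    exact Finset.sum_congr rfl fun a _ => by ring
  have hrec : M.occ π s' a' = (1 - M.disc) * M.init s' * π s' a'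
      + M.disc * ∑ s, ∑ a, M.occ π s a * M.P s a s' * π s' a' := by
    rw [hx, occ_eq, eFun_rec M π hπ s']; ring
  have h0 : 0 ≤ (1 - M.disc) * M.init s' * π s' a' :=
    mul_nonneg (mul_nonneg (by linarith [M.disc_lt_one]) (M.init_nonneg s')) (hπ.1 s' a')
  linarith

lemma exp_le (hπ : IsPolicy π) (s : S) (a : A) (h : S → A → ℝ) (c : ℝ)
    (hc : ∀ s' a', h s' a' ≤ c) :
    ∑ s', M.P s a s' * ∑ a', π s' a' * h s' a' ≤ c := by
  have inner : ∀ s', ∑ a', π s' a' * h s' a' ≤ c := by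
    intro s'
    calc ∑ a', π s' a' * h s' a' ≤ ∑ a', π s' a' * c :=
          Finset.sum_le_sum fun a' _ => mul_le_mul_of_nonneg_left (hc s' a') (hπ.1 s' a')
    _ = c := by rw [← Finset.sum_mul, hπ.2, one_mul]
  calc ∑ s', M.P s a s' * ∑ a', π s' a' * h s' a' ≤ ∑ s', M.P s a s' * c :=
        Finset.sum_le_sum fun s' _ => mul_le_mul_of_nonneg_left (inner s') (M.P_nonneg s a s')
  _ = c := by rw [← Finset.sum_mul, M.P_sum, one_mul]

lemma le_exp (hπ : IsPolicy π) (s : S) (a : A) (h : S → A → ℝ) (c : ℝ)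
    (hc : ∀ s' a', c ≤ h s' a') :
    c ≤ ∑ s', M.P s a s' * ∑ a', π s' a' * h s' a' := by
  have inner : ∀ s', c ≤ ∑ a', π s' a' * h s' a' := by
    intro s'
    calc c = ∑ a', π s' a' * c := by rw [← Finset.sum_mul, hπ.2, one_mul]
    _ ≤ ∑ a', π s' a' * h s' a' :=
          Finset.sum_le_sum fun a' _ => mul_le_mul_of_nonneg_left (hc s' a') (hπ.1 s' a')
  calc c = ∑ s', M.P s a s' * c := by rw [← Finset.sum_mul, M.P_sum, one_mul]
  _ ≤ ∑ s', M.P s a s' * ∑ a', π s' a' * h s' a' :=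
        Finset.sum_le_sum fun s' _ => mul_le_mul_of_nonneg_left (inner s') (M.P_nonneg s a s')

lemma isQ_le (hπ : IsPolicy π) (Q : S → A → ℝ) (hQ : M.IsQ π Q) (s : S) (a : A) :
    Q s a ≤ 1 / (1 - M.disc) := by
  obtain ⟨p, -, hp⟩ := Finset.exists_max_image (univ : Finset (S × A))
    (fun p => Q p.1 p.2) univ_nonempty
  have hγ : (0:ℝ) < 1 - M.disc := by linarith [M.disc_lt_one]
  have hE : ∑ s', M.P p.1 p.2 s' * ∑ a', π s' a' * Q s' a' ≤ Q p.1 p.2 :=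
    exp_le M π hπ _ _ Q _ (fun s' a' => hp (s', a') (mem_univ _))
  have h1 : Q p.1 p.2 ≤ 1 + M.disc * Q p.1 p.2 := by
    calc Q p.1 p.2
        = M.r p.1 p.2 + M.disc * ∑ s', M.P p.1 p.2 s' * ∑ a', π s' a' * Q s' a' := hQ p.1 p.2
    _ ≤ 1 + M.disc * Q p.1 p.2 :=
        add_le_add (M.r_le_one _ _) (mul_le_mul_of_nonneg_left hE M.disc_pos.le)
  have h2 : Q p.1 p.2 ≤ 1 / (1 - M.disc) := by
    rw [le_div_iff₀ hγ]; nlinarith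
  exact (hp (s, a) (mem_univ _)).trans h2

lemma isQ_nonneg (hπ : IsPolicy π) (Q : S → A → ℝ) (hQ : M.IsQ π Q) (s : S) (a : A) :
    0 ≤ Q s a := by
  obtain ⟨p, -, hp⟩ := Finset.exists_min_image (univ : Finset (S × A))
    (fun p => Q p.1 p.2) univ_nonempty
  have hE : Q p.1 p.2 ≤ ∑ s', M.P p.1 p.2 s' * ∑ a', π s' a' * Q s' a' :=
    le_exp M π hπ _ _ Q _ (fun s' a' => hp (s', a') (mem_univ _))
  have h1 : M.disc * Q p.1 p.2 ≤ Q p.1 p.2 := by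
    calc M.disc * Q p.1 p.2
        ≤ M.disc * ∑ s', M.P p.1 p.2 s' * ∑ a', π s' a' * Q s' a' :=
          mul_le_mul_of_nonneg_left hE M.disc_pos.le
    _ ≤ M.r p.1 p.2 + M.disc * ∑ s', M.P p.1 p.2 s' * ∑ a', π s' a' * Q s' a' :=
          le_add_of_nonneg_left (M.r_nonneg _ _)
    _ = Q p.1 p.2 := (hQ p.1 p.2).symm
  have h2 : 0 ≤ Q p.1 p.2 := by nlinarith [M.disc_lt_one]
  exact h2.trans (hp (s, a) (mem_univ _))

lemma bellman_sub (f₁ f₂ : S → A → ℝ) (s : S) (a : A) :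
    M.bellman π f₁ s a - M.bellman π f₂ s a
      = M.disc * ∑ s', M.P s a s' * ∑ a', π s' a' * (f₁ s' a' - f₂ s' a') := by
  simp only [FinMDP.bellman, mul_sub, Finset.sum_sub_distrib]
  ring

lemma sum4_swap (F : S → A → S → A → ℝ) :
    ∑ s, ∑ a, ∑ s', ∑ a', F s a s' a' = ∑ s', ∑ a', ∑ s, ∑ a, F s a s' a' := by
  have h : ∑ p : S × A, ∑ q : S × A, F p.1 p.2 q.1 q.2
      = ∑ q : S × A, ∑ p : S × A, F p.1 p.2 q.1 q.2 := Finset.sum_comm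
  simpa [Fintype.sum_prod_type] using h

lemma sum_weight_le (w h : S → A → ℝ) (c : ℝ) (hw0 : ∀ s a, 0 ≤ w s a)
    (hw1 : ∑ s, ∑ a, w s a = 1) (hc : ∀ s a, h s a ≤ c) :
    ∑ s, ∑ a, w s a * h s a ≤ c := by
  calc ∑ s, ∑ a, w s a * h s a ≤ ∑ s, ∑ a, w s a * c :=
        Finset.sum_le_sum fun s _ => Finset.sum_le_sum fun a _ =>
          mul_le_mul_of_nonneg_left (hc s a) (hw0 s a)
  _ = c := by simp only [← Finset.sum_mul]; rw [hw1, one_mul]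

lemma jensen_sq (w h : S → A → ℝ) (hw0 : ∀ s a, 0 ≤ w s a)
    (hw1 : ∑ s, ∑ a, w s a = 1) :
    (∑ s, ∑ a, w s a * h s a) ^ 2 ≤ ∑ s, ∑ a, w s a * h s a ^ 2 := by
  have key := Finset.sum_mul_sq_le_sq_mul_sq (univ : Finset (S × A))
    (fun p => Real.sqrt (w p.1 p.2)) (fun p => Real.sqrt (w p.1 p.2) * h p.1 p.2)
  have e1 : ∀ p : S × A, Real.sqrt (w p.1 p.2) * (Real.sqrt (w p.1 p.2) * h p.1 p.2)
      = w p.1 p.2 * h p.1 p.2 := by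
    intro p; rw [← mul_assoc, Real.mul_self_sqrt (hw0 _ _)]
  have e2 : ∀ p : S × A, Real.sqrt (w p.1 p.2) ^ 2 = w p.1 p.2 :=
    fun p => Real.sq_sqrt (hw0 _ _)
  have e3 : ∀ p : S × A, (Real.sqrt (w p.1 p.2) * h p.1 p.2) ^ 2
      = w p.1 p.2 * h p.1 p.2 ^ 2 := by
    intro p; rw [mul_pow, e2]
  simp only [e1, e2, e3] at key
  calc (∑ s, ∑ a, w s a * h s a) ^ 2
      = (∑ p : S × A, w p.1 p.2 * h p.1 p.2) ^ 2 := by rw [Fintype.sum_prod_type]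
  _ ≤ (∑ p : S × A, w p.1 p.2) * ∑ p : S × A, w p.1 p.2 * h p.1 p.2 ^ 2 := key
  _ = ∑ s, ∑ a, w s a * h s a ^ 2 := by
      rw [Fintype.sum_prod_type, Fintype.sum_prod_type, hw1, one_mul]

end Aux

/-- Fitted policy evaluation offline Bellman residual bound. -/
theorem stmt13 (M : FinMDP S A) (π Q : S → A → ℝ) (hπ : IsPolicy π) (hQ : M.IsQ π Q)
    (ν : S → A → ℝ) (hν0 : ∀ s a, 0 ≤ ν s a) (hν1 : ∑ s, ∑ a, ν s a = 1)
    (lam ε εbe D : ℝ) (hlam : 0 < lam) (hε : 0 ≤ ε)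
    (hεbe0 : 0 ≤ εbe) (hεbe1 : εbe ≤ 2 / (1 - M.disc)) (hD : 0 ≤ D)
    (fprev f : S → A → ℝ)
    (hfprevmem : ∀ s a, fprev s a ∈ Set.Icc 0 (1 / (1 - M.disc)))
    (hfmem : ∀ s a, f s a ∈ Set.Icc 0 (1 / (1 - M.disc)))
    (horacle : ∃ g : S → A → ℝ,
      (∀ s a, g s a ∈ Set.Icc 0 (1 / (1 - M.disc))) ∧
      (∀ s a, |g s a - M.bellman π fprev s a| ≤ εbe) ∧
      ((∑ s, ∑ a, ν s a * (f s a - M.bellman π fprev s a) ^ 2)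
          + lam * ∑ s, ∑ a, M.occ π s a * (f s a - Q s a) ^ 2
        ≤ (∑ s, ∑ a, ν s a * (g s a - M.bellman π fprev s a) ^ 2)
          + lam * (∑ s, ∑ a, M.occ π s a * (g s a - Q s a) ^ 2) + ε))
    (hprev : ∑ s, ∑ a, M.occ π s a * (fprev s a - Q s a) ^ 2 ≤ D) :
    ∑ s, ∑ a, ν s a * (f s a - M.bellman π fprev s a) ^ 2
      ≤ lam * (4 * εbe / (1 - M.disc) + M.disc * D) + 2 * εbe / (1 - M.disc) + ε := by
  obtain ⟨g, hgmem, hgT, hor⟩ := horacle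
  have hγ : (0:ℝ) < 1 - M.disc := by linarith [M.disc_lt_one]
  have hQ0 : ∀ s a, 0 ≤ Q s a := isQ_nonneg M π hπ Q hQ
  have hQ1 : ∀ s a, Q s a ≤ 1 / (1 - M.disc) := isQ_le M π hπ Q hQ
  have hub : ∀ s a, fprev s a - Q s a ≤ 1 / (1 - M.disc) := fun s a => by
    have h1 := (hfprevmem s a).2; have h2 := hQ0 s a; linarith
  have hlb : ∀ s a, -(1 / (1 - M.disc)) ≤ fprev s a - Q s a := fun s a => by
    have h1 := (hfprevmem s a).1; have h2 := hQ1 s a; linarith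
  have hvdiff : ∀ s a, M.bellman π fprev s a - Q s a
      = M.disc * ∑ s', M.P s a s' * ∑ a', π s' a' * (fprev s' a' - Q s' a') := by
    intro s a
    calc M.bellman π fprev s a - Q s a
        = M.bellman π fprev s a - M.bellman π Q s a := by rw [← hQ s a]
    _ = _ := bellman_sub M π fprev Q s a
  have hvabs : ∀ s a, |M.bellman π fprev s a - Q s a| ≤ M.disc / (1 - M.disc) := by
    intro s a
    rw [hvdiff s a, abs_mul, abs_of_nonneg M.disc_pos.le]
    have hXa : |∑ s', M.P s a s' * ∑ a', π s' a' * (fprev s' a' - Q s' a')|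
        ≤ 1 / (1 - M.disc) :=
      abs_le.2 ⟨le_exp M π hπ s a _ _ hlb, exp_le M π hπ s a _ _ hub⟩
    calc M.disc * |∑ s', M.P s a s' * ∑ a', π s' a' * (fprev s' a' - Q s' a')|
        ≤ M.disc * (1 / (1 - M.disc)) := mul_le_mul_of_nonneg_left hXa M.disc_pos.le
    _ = M.disc / (1 - M.disc) := by ring
  -- pointwise bound on (g - T)^2
  have hgT2 : ∀ s a, (g s a - M.bellman π fprev s a) ^ 2 ≤ 2 * εbe / (1 - M.disc) := by
    intro s a
    have h1 : (g s a - M.bellman π fprev s a) ^ 2 ≤ εbe ^ 2 := by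
      rw [← sq_abs]
      exact pow_le_pow_left₀ (abs_nonneg _) (hgT s a) 2
    have h2 : εbe ^ 2 ≤ εbe * (2 / (1 - M.disc)) := by
      rw [sq]; exact mul_le_mul_of_nonneg_left hεbe1 hεbe0
    calc (g s a - M.bellman π fprev s a) ^ 2 ≤ εbe ^ 2 := h1
    _ ≤ εbe * (2 / (1 - M.disc)) := h2
    _ = 2 * εbe / (1 - M.disc) := by ring
  -- pointwise bound on cross term
  have h2uv : ∀ s a, 2 * (g s a - M.bellman π fprev s a) * (M.bellman π fprev s a - Q s a)
      ≤ 2 * εbe / (1 - M.disc) := by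
    intro s a
    have h1 : (g s a - M.bellman π fprev s a) * (M.bellman π fprev s a - Q s a)
        ≤ |g s a - M.bellman π fprev s a| * |M.bellman π fprev s a - Q s a| := by
      calc _ ≤ |(g s a - M.bellman π fprev s a) * (M.bellman π fprev s a - Q s a)| :=
            le_abs_self _
      _ = |g s a - M.bellman π fprev s a| * |M.bellman π fprev s a - Q s a| := abs_mul _ _
    have h2 : |g s a - M.bellman π fprev s a| * |M.bellman π fprev s a - Q s a|
        ≤ εbe * (M.disc / (1 - M.disc)) :=
      mul_le_mul (hgT s a) (hvabs s a) (abs_nonneg _) hεbe0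
    have h3 : M.disc / (1 - M.disc) ≤ 1 / (1 - M.disc) := by
      rw [div_eq_mul_inv, div_eq_mul_inv]
      exact mul_le_mul_of_nonneg_right M.disc_lt_one.le (inv_nonneg.2 hγ.le)
    have h4 : εbe * (M.disc / (1 - M.disc)) ≤ εbe * (1 / (1 - M.disc)) :=
      mul_le_mul_of_nonneg_left h3 hεbe0
    have h5 : (g s a - M.bellman π fprev s a) * (M.bellman π fprev s a - Q s a)
        ≤ εbe * (1 / (1 - M.disc)) := le_trans h1 (le_trans h2 h4)
    calc 2 * (g s a - M.bellman π fprev s a) * (M.bellman π fprev s a - Q s a)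
        = 2 * ((g s a - M.bellman π fprev s a) * (M.bellman π fprev s a - Q s a)) := by ring
    _ ≤ 2 * (εbe * (1 / (1 - M.disc))) := by linarith
    _ = 2 * εbe / (1 - M.disc) := by ring
  -- conversions for Jensen
  have hconv : ∀ (h : S → A → ℝ) (s : S) (a : A),
      ∑ s', M.P s a s' * ∑ a', π s' a' * h s' a'
        = ∑ s', ∑ a', (M.P s a s' * π s' a') * h s' a' := by
    intro h s a
    refine Finset.sum_congr rfl fun s' _ => ?_
    rw [Finset.mul_sum]
    exact Finset.sum_congr rfl fun a' _ => by ring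
  have hw1 : ∀ s a, ∑ s', ∑ a', M.P s a s' * π s' a' = 1 := by
    intro s a
    calc ∑ s', ∑ a', M.P s a s' * π s' a' = ∑ s', M.P s a s' := by
          refine Finset.sum_congr rfl fun s' _ => ?_
          rw [← Finset.mul_sum, hπ.2, mul_one]
    _ = 1 := M.P_sum s a
  have hpt : ∀ s a, (M.bellman π fprev s a - Q s a) ^ 2
      ≤ M.disc ^ 2 * ∑ s', ∑ a', (M.P s a s' * π s' a') * (fprev s' a' - Q s' a') ^ 2 := by
    intro s a
    rw [hvdiff s a, mul_pow, hconv (fun s' a' => fprev s' a' - Q s' a') s a]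
    refine mul_le_mul_of_nonneg_left ?_ (sq_nonneg M.disc)
    exact jensen_sq (fun s' a' => M.P s a s' * π s' a') (fun s' a' => fprev s' a' - Q s' a')
      (fun s' a' => mul_nonneg (M.P_nonneg s a s') (hπ.1 s' a')) (hw1 s a)
  -- bound on third term
  have hterm3 : ∑ s, ∑ a, M.occ π s a * (M.bellman π fprev s a - Q s a) ^ 2
      ≤ M.disc * D := by
    calc ∑ s, ∑ a, M.occ π s a * (M.bellman π fprev s a - Q s a) ^ 2
        ≤ ∑ s, ∑ a, M.occ π s a
            * (M.disc ^ 2 * ∑ s', ∑ a', (M.P s a s' * π s' a') * (fprev s' a' - Q s' a') ^ 2) :=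
          Finset.sum_le_sum fun s _ => Finset.sum_le_sum fun a _ =>
            mul_le_mul_of_nonneg_left (hpt s a) (occ_nonneg M π hπ s a)
    _ = ∑ s, ∑ a, ∑ s', ∑ a',
          M.disc ^ 2 * (M.occ π s a * M.P s a s' * π s' a') * (fprev s' a' - Q s' a') ^ 2 := by
        simp only [Finset.mul_sum]
        exact Finset.sum_congr rfl fun s _ => Finset.sum_congr rfl fun a _ =>
          Finset.sum_congr rfl fun s' _ => Finset.sum_congr rfl fun a' _ => by ring
    _ = ∑ s', ∑ a', ∑ s, ∑ a,
          M.disc ^ 2 * (M.occ π s a * M.P s a s' * π s' a') * (fprev s' a' - Q s' a') ^ 2 :=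
        sum4_swap _
    _ = M.disc * ∑ s', ∑ a', (fprev s' a' - Q s' a') ^ 2
          * (M.disc * ∑ s, ∑ a, M.occ π s a * M.P s a s' * π s' a') := by
        simp only [Finset.mul_sum]
        refine Finset.sum_congr rfl fun s' _ => Finset.sum_congr rfl fun a' _ => ?_
        refine Finset.sum_congr rfl fun s _ => Finset.sum_congr rfl fun a _ => by ring
    _ ≤ M.disc * ∑ s', ∑ a', (fprev s' a' - Q s' a') ^ 2 * M.occ π s' a' := by
        refine mul_le_mul_of_nonneg_left
          (Finset.sum_le_sum fun s' _ => Finset.sum_le_sum fun a' _ => ?_) M.disc_pos.le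
        exact mul_le_mul_of_nonneg_left (occ_flow M π hπ s' a') (sq_nonneg _)
    _ ≤ M.disc * D := by
        refine mul_le_mul_of_nonneg_left ?_ M.disc_pos.le
        calc ∑ s', ∑ a', (fprev s' a' - Q s' a') ^ 2 * M.occ π s' a'
            = ∑ s', ∑ a', M.occ π s' a' * (fprev s' a' - Q s' a') ^ 2 :=
              Finset.sum_congr rfl fun s' _ => Finset.sum_congr rfl fun a' _ => mul_comm _ _
        _ ≤ D := hprev
  -- occupancy facts
  have hoccsum := occ_sum M π hπ
  have hocc0 : ∀ s a, 0 ≤ M.occ π s a := occ_nonneg M π hπ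
  -- decomposition of the d-term for g
  have hAd' : ∑ s, ∑ a, M.occ π s a * (g s a - Q s a) ^ 2
      = (∑ s, ∑ a, M.occ π s a * (g s a - M.bellman π fprev s a) ^ 2)
      + (∑ s, ∑ a, M.occ π s a
          * (2 * (g s a - M.bellman π fprev s a) * (M.bellman π fprev s a - Q s a)))
      + (∑ s, ∑ a, M.occ π s a * (M.bellman π fprev s a - Q s a) ^ 2) := by
    simp only [← Finset.sum_add_distrib]
    exact Finset.sum_congr rfl fun s _ => Finset.sum_congr rfl fun a _ => by ring
  have hterm1 : ∑ s, ∑ a, M.occ π s a * (g s a - M.bellman π fprev s a) ^ 2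
      ≤ 2 * εbe / (1 - M.disc) :=
    sum_weight_le _ _ _ hocc0 hoccsum hgT2
  have hterm2 : ∑ s, ∑ a, M.occ π s a
        * (2 * (g s a - M.bellman π fprev s a) * (M.bellman π fprev s a - Q s a))
      ≤ 2 * εbe / (1 - M.disc) :=
    sum_weight_le _ _ _ hocc0 hoccsum h2uv
  have hAd : ∑ s, ∑ a, M.occ π s a * (g s a - Q s a) ^ 2
      ≤ 4 * εbe / (1 - M.disc) + M.disc * D := by
    rw [hAd']
    have : 2 * εbe / (1 - M.disc) + 2 * εbe / (1 - M.disc) = 4 * εbe / (1 - M.disc) := by ring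
    linarith
  have hAν : ∑ s, ∑ a, ν s a * (g s a - M.bellman π fprev s a) ^ 2
      ≤ 2 * εbe / (1 - M.disc) :=
    sum_weight_le _ _ _ hν0 hν1 hgT2
  have hfQ0 : 0 ≤ ∑ s, ∑ a, M.occ π s a * (f s a - Q s a) ^ 2 :=
    Finset.sum_nonneg fun s _ => Finset.sum_nonneg fun a _ =>
      mul_nonneg (hocc0 s a) (sq_nonneg _)
  have hstep : ∑ s, ∑ a, ν s a * (f s a - M.bellman π fprev s a) ^ 2
      ≤ (∑ s, ∑ a, ν s a * (g s a - M.bellman π fprev s a) ^ 2)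
        + lam * (∑ s, ∑ a, M.occ π s a * (g s a - Q s a) ^ 2) + ε := by
    have := mul_nonneg hlam.le hfQ0
    linarith
  have hlamAd := mul_le_mul_of_nonneg_left hAd hlam.le
  calc ∑ s, ∑ a, ν s a * (f s a - M.bellman π fprev s a) ^ 2
      ≤ (∑ s, ∑ a, ν s a * (g s a - M.bellman π fprev s a) ^ 2)
        + lam * (∑ s, ∑ a, M.occ π s a * (g s a - Q s a) ^ 2) + ε := hstep
  _ ≤ 2 * εbe / (1 - M.disc) + lam * (4 * εbe / (1 - M.disc) + M.disc * D) + ε := by linarith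
  _ = lam * (4 * εbe / (1 - M.disc) + M.disc * D) + 2 * εbe / (1 - M.disc) + ε := by ring
end

section
/- Bellman residual of the averaged iterate: Let π be a policy of a finite discounted MDP, ν a probability distribution on S×A, Δ ≥ 0, K ≥ 1, and let f_{m+1}, …, f_{m+K} : S×A → [0, 1/(1−γ)] (with f_m also given in [0, 1/(1−γ)]) satisfy E_{ν}[(f_k − T^π f_{k−1})²] ≤ Δ for all k ∈ {m+2, …, m+K}. Define f̄ = (1/K)·Σ_{k=m+1}^{m+K} f_k. Then E_{(s,a)∼ν}[(f̄(s,a) − (T^π f̄)(s,a))²] ≤ 1/(K·(1−γ)²) + Δ. -/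
open Finset

variable {S A : Type*} [Fintype S] [Fintype A] [Nonempty S] [Nonempty A]

lemma swap_mul {β : Type*} [Fintype β] (n : ℕ) (w : β → ℝ) (c : ℝ) (X : ℕ → β → ℝ) :
    ∑ b, w b * (c * ∑ i ∈ range n, X i b) = c * ∑ i ∈ range n, ∑ b, w b * X i b := by
  simp only [Finset.mul_sum]
  rw [Finset.sum_comm]
  exact Finset.sum_congr rfl fun i _ => Finset.sum_congr rfl fun b _ => by ring

lemma bellman_avg (M : FinMDP S A) (π : S → A → ℝ) (K : ℕ) (hK : 0 < K)
    (F : ℕ → S → A → ℝ) (g : S → A → ℝ)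
    (hg : ∀ s a, g s a = (1 / (K : ℝ)) * ∑ i ∈ range K, F i s a) (s : S) (a : A) :
    M.bellman π g s a = (1 / (K : ℝ)) * ∑ i ∈ range K, M.bellman π (F i) s a := by
  have hKne : (K : ℝ) ≠ 0 := Nat.cast_ne_zero.mpr hK.ne'
  simp only [FinMDP.bellman, hg, one_div]
  rw [Finset.sum_add_distrib, Finset.sum_const, Finset.card_range, nsmul_eq_mul]
  rw [mul_add, ← mul_assoc, inv_mul_cancel₀ hKne, one_mul]
  congr 1
  have inner : ∀ s' : S, ∑ a', π s' a' * ((K:ℝ)⁻¹ * ∑ i ∈ range K, F i s' a')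
      = (K:ℝ)⁻¹ * ∑ i ∈ range K, ∑ a', π s' a' * F i s' a' := fun s' =>
    swap_mul K (π s') _ (fun i => F i s')
  simp only [inner]
  rw [swap_mul K (M.P s a) _ (fun i s' => ∑ a', π s' a' * F i s' a')]
  simp only [Finset.mul_sum, Finset.sum_mul]
  exact Finset.sum_congr rfl fun i _ => Finset.sum_congr rfl fun s' _ =>
    Finset.sum_congr rfl fun a' _ => by ring

lemma bellman_mem (M : FinMDP S A) (π : S → A → ℝ) (hπ : IsPolicy π) (g : S → A → ℝ)
    (hg : ∀ s a, g s a ∈ Set.Icc 0 (1 / (1 - M.disc))) (s : S) (a : A) :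
    M.bellman π g s a ∈ Set.Icc 0 (1 / (1 - M.disc)) := by
  have hd : 0 < 1 - M.disc := by linarith [M.disc_lt_one]
  have hB : (0:ℝ) ≤ 1 / (1 - M.disc) := by positivity
  have hin : ∀ s', ∑ a', π s' a' * g s' a' ∈ Set.Icc 0 (1 / (1 - M.disc)) := by
    intro s'
    constructor
    · exact Finset.sum_nonneg fun a' _ => mul_nonneg (hπ.1 s' a') (hg s' a').1
    · calc ∑ a', π s' a' * g s' a' ≤ ∑ a', π s' a' * (1 / (1 - M.disc)) :=
            Finset.sum_le_sum fun a' _ => mul_le_mul_of_nonneg_left (hg s' a').2 (hπ.1 s' a')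
      _ = 1 / (1 - M.disc) := by rw [← Finset.sum_mul, hπ.2 s', one_mul]
  have hout : ∑ s', M.P s a s' * ∑ a', π s' a' * g s' a' ∈ Set.Icc 0 (1 / (1 - M.disc)) := by
    constructor
    · exact Finset.sum_nonneg fun s' _ => mul_nonneg (M.P_nonneg s a s') (hin s').1
    · calc ∑ s', M.P s a s' * ∑ a', π s' a' * g s' a'
          ≤ ∑ s', M.P s a s' * (1 / (1 - M.disc)) :=
            Finset.sum_le_sum fun s' _ => mul_le_mul_of_nonneg_left (hin s').2 (M.P_nonneg s a s')
      _ = 1 / (1 - M.disc) := by rw [← Finset.sum_mul, M.P_sum s a, one_mul]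
  constructor
  · rw [FinMDP.bellman]
    have := M.r_nonneg s a
    have := M.disc_pos
    nlinarith [hout.1]
  · have h1 := M.r_le_one s a
    have h2 := hout.2
    have h3 := M.disc_pos
    rw [FinMDP.bellman]
    have : M.disc * (∑ s', M.P s a s' * ∑ a', π s' a' * g s' a') ≤ M.disc * (1 / (1 - M.disc)) :=
      mul_le_mul_of_nonneg_left h2 h3.le
    have heq : 1 + M.disc * (1 / (1 - M.disc)) = 1 / (1 - M.disc) := by field_simp; ring
    linarith

lemma telescope_sum (K' : ℕ) (x y : ℕ → ℝ) :
    ∑ i ∈ range (K' + 1), (if i = 0 then x 0 - y K' else x i - y (i - 1)) =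
      (∑ i ∈ range (K' + 1), x i) - ∑ i ∈ range (K' + 1), y i := by
  rw [Finset.sum_range_succ' (fun i => if i = 0 then x 0 - y K' else x i - y (i - 1)) K',
    Finset.sum_range_succ' x K', Finset.sum_range_succ y K']
  simp only [Nat.succ_ne_zero, if_false, if_true, Nat.add_sub_cancel, reduceIte]
  rw [Finset.sum_sub_distrib]
  ring

lemma sq_avg_le (n : ℕ) (hn : 0 < n) (t : ℕ → ℝ) :
    ((1 / (n : ℝ)) * ∑ i ∈ range n, t i) ^ 2 ≤ (1 / (n : ℝ)) * ∑ i ∈ range n, t i ^ 2 := by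
  have h := sq_sum_le_card_mul_sum_sq (s := range n) (f := t)
  rw [Finset.card_range] at h
  have hn' : (0:ℝ) < n := by exact_mod_cast hn
  rw [mul_pow]
  calc (1/(n:ℝ))^2 * (∑ i ∈ range n, t i)^2
      ≤ (1/(n:ℝ))^2 * ((n:ℝ) * ∑ i ∈ range n, t i ^ 2) :=
        mul_le_mul_of_nonneg_left (by exact_mod_cast h) (by positivity)
    _ = (1/(n:ℝ)) * ∑ i ∈ range n, t i ^ 2 := by field_simp

/-- Bellman residual of the averaged iterate. -/
theorem stmt14 (M : FinMDP S A) (π : S → A → ℝ) (hπ : IsPolicy π)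
    (ν : S → A → ℝ) (hν0 : ∀ s a, 0 ≤ ν s a) (hν1 : ∑ s, ∑ a, ν s a = 1)
    (Δ : ℝ) (hΔ : 0 ≤ Δ) (m K : ℕ) (hK : 1 ≤ K)
    (f : ℕ → S → A → ℝ)
    (hmem : ∀ k, m ≤ k → k ≤ m + K → ∀ s a, f k s a ∈ Set.Icc 0 (1 / (1 - M.disc)))
    (hres : ∀ k, m + 2 ≤ k → k ≤ m + K →
      ∑ s, ∑ a, ν s a * (f k s a - M.bellman π (f (k - 1)) s a) ^ 2 ≤ Δ)
    (fbar : S → A → ℝ)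
    (hfbar : ∀ s a, fbar s a = (1 / (K : ℝ)) * ∑ k ∈ Finset.Icc (m + 1) (m + K), f k s a) :
    ∑ s, ∑ a, ν s a * (fbar s a - M.bellman π fbar s a) ^ 2
      ≤ 1 / (K * (1 - M.disc) ^ 2) + Δ := by
  obtain ⟨K', rfl⟩ : ∃ K', K = K' + 1 := ⟨K - 1, by omega⟩
  set K := K' + 1 with hKdef
  have hKpos : 0 < K := Nat.succ_pos K'
  have hKne : (K : ℝ) ≠ 0 := Nat.cast_ne_zero.mpr hKpos.ne'
  have hKR : (0:ℝ) < K := Nat.cast_pos.mpr hKpos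
  have hd : 0 < 1 - M.disc := by linarith [M.disc_lt_one]
  set B : ℝ := 1 / (1 - M.disc) with hBdef
  have hB0 : (0:ℝ) ≤ B := by positivity
  -- averaged iterate over range K
  set F : ℕ → S → A → ℝ := fun i => f (m + 1 + i) with hFdef
  have hfbar' : ∀ s a, fbar s a = (1 / (K : ℝ)) * ∑ i ∈ range K, F i s a := by
    intro s a
    rw [hfbar]
    congr 1
    rw [← Finset.Ico_add_one_right_eq_Icc, Finset.sum_Ico_eq_sum_range]
    have : m + K + 1 - (m + 1) = K := by omega
    rw [this]
  have hFmem : ∀ i, i < K → ∀ s a, F i s a ∈ Set.Icc 0 B :=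
    fun i hi => hmem (m + 1 + i) (by omega) (by omega)
  have hT : ∀ s a, M.bellman π (F K') s a ∈ Set.Icc 0 B :=
    bellman_mem M π hπ (F K') (hFmem K' (by omega))
  -- residual terms
  set G : ℕ → S → A → ℝ := fun i s a =>
    if i = 0 then F 0 s a - M.bellman π (F K') s a
    else F i s a - M.bellman π (F (i - 1)) s a with hGdef
  -- pointwise decomposition
  have decomp : ∀ s a, fbar s a - M.bellman π fbar s a
      = (1 / (K : ℝ)) * ∑ i ∈ range K, G i s a := by
    intro s a
    rw [hfbar' s a, bellman_avg M π K hKpos F fbar hfbar' s a, ← mul_sub]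
    congr 1
    simp only [hGdef]
    exact (telescope_sum K' (fun i => F i s a) (fun i => M.bellman π (F i) s a)).symm
  -- pointwise square bound
  have ptwise : ∀ s a, (fbar s a - M.bellman π fbar s a) ^ 2
      ≤ (1 / (K : ℝ)) * ∑ i ∈ range K, G i s a ^ 2 := by
    intro s a
    rw [decomp s a]
    exact sq_avg_le K hKpos (fun i => G i s a)
  -- sum over ν
  have step1 : ∑ s, ∑ a, ν s a * (fbar s a - M.bellman π fbar s a) ^ 2
      ≤ (1 / (K : ℝ)) * ∑ i ∈ range K, ∑ s, ∑ a, ν s a * G i s a ^ 2 := by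
    calc ∑ s, ∑ a, ν s a * (fbar s a - M.bellman π fbar s a) ^ 2
        ≤ ∑ s, ∑ a, ν s a * ((1 / (K : ℝ)) * ∑ i ∈ range K, G i s a ^ 2) :=
          Finset.sum_le_sum fun s _ => Finset.sum_le_sum fun a _ =>
            mul_le_mul_of_nonneg_left (ptwise s a) (hν0 s a)
      _ = ∑ s, (1 / (K : ℝ)) * ∑ i ∈ range K, ∑ a, ν s a * G i s a ^ 2 :=
          Finset.sum_congr rfl fun s _ => swap_mul K (ν s) _ (fun i a => G i s a ^ 2)
      _ = (1 / (K : ℝ)) * ∑ i ∈ range K, ∑ s, ∑ a, ν s a * G i s a ^ 2 := by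
          rw [← Finset.mul_sum, Finset.sum_comm]
  -- bound for i = 0
  have h0 : ∑ s, ∑ a, ν s a * G 0 s a ^ 2 ≤ B ^ 2 := by
    have hsq : ∀ s a, G 0 s a ^ 2 ≤ B ^ 2 := by
      intro s a
      have h1 := hFmem 0 (by omega) s a
      have h2 := hT s a
      simp only [hGdef, if_pos rfl]
      nlinarith [h1.1, h1.2, h2.1, h2.2]
    calc ∑ s, ∑ a, ν s a * G 0 s a ^ 2 ≤ ∑ s, ∑ a, ν s a * B ^ 2 :=
          Finset.sum_le_sum fun s _ => Finset.sum_le_sum fun a _ =>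
            mul_le_mul_of_nonneg_left (hsq s a) (hν0 s a)
      _ = B ^ 2 := by
          simp only [← Finset.sum_mul]
          rw [hν1, one_mul]
  -- bound for i ≥ 1
  have hsucc : ∀ i, i < K' → ∑ s, ∑ a, ν s a * G (i + 1) s a ^ 2 ≤ Δ := by
    intro i hi
    have h := hres (m + 2 + i) (by omega) (by omega)
    have e1 : m + 1 + (i + 1) = m + 2 + i := by omega
    have e2 : m + 1 + i = m + 2 + i - 1 := by omega
    simp only [hGdef, Nat.succ_ne_zero, if_false, Nat.add_sub_cancel, hFdef, e1, e2]
    exact h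
  -- put together
  have step2 : ∑ i ∈ range K, ∑ s, ∑ a, ν s a * G i s a ^ 2 ≤ B ^ 2 + K' * Δ := by
    rw [Finset.sum_range_succ' (fun i => ∑ s, ∑ a, ν s a * G i s a ^ 2) K']
    have : ∑ i ∈ range K', ∑ s, ∑ a, ν s a * G (i + 1) s a ^ 2 ≤ ∑ _i ∈ range K', Δ :=
      Finset.sum_le_sum fun i hi => hsucc i (Finset.mem_range.mp hi)
    rw [Finset.sum_const, Finset.card_range, nsmul_eq_mul] at this
    linarith [h0]
  have goalRHS : 1 / ((K : ℝ) * (1 - M.disc) ^ 2) = (1 / (K : ℝ)) * B ^ 2 := by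
    rw [hBdef]
    field_simp
  calc ∑ s, ∑ a, ν s a * (fbar s a - M.bellman π fbar s a) ^ 2
      ≤ (1 / (K : ℝ)) * ∑ i ∈ range K, ∑ s, ∑ a, ν s a * G i s a ^ 2 := step1
    _ ≤ (1 / (K : ℝ)) * (B ^ 2 + K' * Δ) :=
        mul_le_mul_of_nonneg_left step2 (by positivity)
    _ ≤ 1 / ((K : ℝ) * (1 - M.disc) ^ 2) + Δ := by
        rw [goalRHS]
        have hK'K : (K' : ℝ) ≤ K := by exact_mod_cast Nat.le_succ K'
        have : (1 / (K : ℝ)) * ((K':ℝ) * Δ) ≤ Δ := by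
          rw [div_mul_eq_mul_div, one_mul, div_le_iff₀ hKR]
          nlinarith
        nlinarith [this]
end

section
/- Cumulative suboptimality of hybrid actor-critic under offline transfer (deterministic form of the Bellman-complete case of Theorem 4.5): Let |A| = A ≥ 2, T ≥ 4·log(A), η = (1−γ)·√(log(A)/T), and let ν be a probability distribution on S×A. Let f^1, …, f^T : S×A → [0, 1/(1−γ)], and let the policies π^1, …, π^T be generated by π^1(·|s) uniform on A and π^{t+1}(a|s) = π^t(a|s)·exp(η f^t(s,a)) / Σ_{a'} π^t(a'|s)·exp(η f^t(s,a')). Suppose for every t: (i) E_{d^{π^t}}[(f^t − Q^{π^t})²] ≤ Δ_on; (ii) E_{ν}[(f^t − T^{π^t} f^t)²] ≤ Δ_off; and (iii) for the comparator policy π^e, E_{(s,a)∼d^{π^e}}[(T^{π^t} f^t)(s,a) − f^t(s,a)] ≤ C·√(E_{ν}[(T^{π^t} f^t − f^t)²]) with C ≥ 0. Then Σ_{t=1}^T (V^{π^e} − V^{π^t}) ≤ T·√(Δ_on/(1−γ)) + (C·T/(1−γ))·√(Δ_off) + (2/(1−γ)²)·√(log(A)·T). -/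
open Finset

variable {S A : Type*} [Fintype S] [Fintype A] [Nonempty S] [Nonempty A]

set_option linter.unusedSectionVars false

/-! ### auxiliary lemmas -/

lemma summable_geom_bound {γ : ℝ} (h0 : 0 ≤ γ) (h1 : γ < 1) (c : ℕ → ℝ) (K : ℝ)
    (hK : ∀ t, |c t| ≤ K) : Summable (fun t => γ ^ t * c t) := by
  apply Summable.of_abs
  apply Summable.of_nonneg_of_le (fun t => abs_nonneg _) (fun t => ?_)
    (((summable_geometric_of_lt_one h0 h1).mul_right K))
  rw [abs_mul, abs_pow, abs_of_nonneg h0]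
  exact mul_le_mul_of_nonneg_left (hK t) (pow_nonneg h0 t)

lemma tsum_geom_telescope {γ : ℝ} (h0 : 0 ≤ γ) (h1 : γ < 1) (r v : ℕ → ℝ) (Kr Kv : ℝ)
    (hr : ∀ t, |r t| ≤ Kr) (hv : ∀ t, |v t| ≤ Kv) :
    ∑' t : ℕ, γ ^ t * (r t + γ * v (t + 1) - v t)
      = (∑' t : ℕ, γ ^ t * r t) - v 0 := by
  have hsr : Summable (fun t => γ ^ t * r t) := summable_geom_bound h0 h1 r Kr hr
  have hw : ∀ t : ℕ, γ ^ t * (γ * v (t+1) - v t) = γ ^ (t+1) * v (t+1) - γ ^ t * v t := by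
    intro t; ring
  have hsw : Summable (fun t => γ ^ t * (γ * v (t+1) - v t)) := by
    apply summable_geom_bound h0 h1 _ (γ * Kv + Kv)
    intro t
    calc |γ * v (t+1) - v t| ≤ |γ * v (t+1)| + |v t| := abs_sub _ _
    _ ≤ γ * Kv + Kv := by
        rw [abs_mul, abs_of_nonneg h0]
        exact add_le_add (mul_le_mul_of_nonneg_left (hv _) h0) (hv t)
  have hwsum : HasSum (fun t => γ ^ t * (γ * v (t+1) - v t)) (-(v 0)) := by
    rw [hsw.hasSum_iff_tendsto_nat]
    have hps : ∀ n : ℕ, ∑ t ∈ Finset.range n, γ ^ t * (γ * v (t+1) - v t)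
        = γ ^ n * v n - γ ^ 0 * v 0 := by
      intro n
      rw [← Finset.sum_range_sub (fun t => γ ^ t * v t) n]
      exact Finset.sum_congr rfl fun t _ => hw t
    simp only [hps, pow_zero, one_mul]
    have hbnd : ∀ n : ℕ, ‖γ ^ n * v n‖ ≤ γ ^ n * Kv := by
      intro n
      rw [Real.norm_eq_abs, abs_mul, abs_pow, abs_of_nonneg h0]
      exact mul_le_mul_of_nonneg_left (hv n) (pow_nonneg h0 n)
    have hlim : Filter.Tendsto (fun n : ℕ => γ ^ n * Kv) Filter.atTop (nhds 0) := by
      simpa using (tendsto_pow_atTop_nhds_zero_of_lt_one h0 h1).mul_const Kv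
    have : Filter.Tendsto (fun n : ℕ => γ ^ n * v n) Filter.atTop (nhds 0) :=
      squeeze_zero_norm hbnd hlim
    simpa using this.sub_const (v 0)
  have : ∀ t : ℕ, γ ^ t * (r t + γ * v (t + 1) - v t)
      = γ ^ t * r t + γ ^ t * (γ * v (t+1) - v t) := fun t => by ring
  rw [tsum_congr this, Summable.tsum_add hsr hsw, hwsum.tsum_eq]
  ring

namespace FinMDP
variable (M : FinMDP S A)

lemma one_sub_disc_pos : 0 < 1 - M.disc := by linarith [M.disc_lt_one]

lemma stateDist_nonneg (π : S → A → ℝ) (hπ : IsPolicy π) (t : ℕ) (s : S) :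
    0 ≤ M.stateDist π t s := by
  induction t generalizing s with
  | zero => exact M.init_nonneg s
  | succ t ih =>
      apply Finset.sum_nonneg; intro s' _
      apply Finset.sum_nonneg; intro a _
      exact mul_nonneg (mul_nonneg (ih s') (hπ.1 s' a)) (M.P_nonneg s' a s)

lemma stateDist_sum_one (π : S → A → ℝ) (hπ : IsPolicy π) (t : ℕ) :
    ∑ s, M.stateDist π t s = 1 := by
  induction t with
  | zero => exact M.init_sum
  | succ t ih =>
      show ∑ s', ∑ s, ∑ a, M.stateDist π t s * π s a * M.P s a s' = 1
      rw [Finset.sum_comm]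
      have : ∀ s, ∑ s', ∑ a, M.stateDist π t s * π s a * M.P s a s'
          = M.stateDist π t s := by
        intro s
        rw [Finset.sum_comm]
        have : ∀ a, ∑ s', M.stateDist π t s * π s a * M.P s a s'
            = M.stateDist π t s * π s a := by
          intro a
          rw [← Finset.mul_sum, M.P_sum, mul_one]
        rw [Finset.sum_congr rfl fun a _ => this a, ← Finset.mul_sum, hπ.2, mul_one]
      rw [Finset.sum_congr rfl fun s _ => this s, ih]

lemma stateDist_le_one (π : S → A → ℝ) (hπ : IsPolicy π) (t : ℕ) (s : S) :
    M.stateDist π t s ≤ 1 := by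
  rw [← M.stateDist_sum_one π hπ t]
  exact Finset.single_le_sum (fun s' _ => M.stateDist_nonneg π hπ t s') (Finset.mem_univ s)

/-- Expectation of a state function under the time-`t` state distribution. -/
noncomputable def SE (π : S → A → ℝ) (g : S → ℝ) (t : ℕ) : ℝ :=
  ∑ s, M.stateDist π t s * g s

lemma SE_abs_le (π : S → A → ℝ) (hπ : IsPolicy π) (g : S → ℝ) (t : ℕ) :
    |M.SE π g t| ≤ ∑ s, |g s| := by
  calc |M.SE π g t| ≤ ∑ s, |M.stateDist π t s * g s| := Finset.abs_sum_le_sum_abs _ _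
  _ ≤ ∑ s, |g s| := by
      apply Finset.sum_le_sum; intro s _
      rw [abs_mul, abs_of_nonneg (M.stateDist_nonneg π hπ t s)]
      calc M.stateDist π t s * |g s| ≤ 1 * |g s| :=
        mul_le_mul_of_nonneg_right (M.stateDist_le_one π hπ t s) (abs_nonneg _)
      _ = |g s| := one_mul _

lemma SE_le (π : S → A → ℝ) (hπ : IsPolicy π) (g : S → ℝ) (K : ℝ) (hg : ∀ s, g s ≤ K)
    (t : ℕ) : M.SE π g t ≤ K := by
  calc M.SE π g t ≤ ∑ s, M.stateDist π t s * K := by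
        apply Finset.sum_le_sum; intro s _
        exact mul_le_mul_of_nonneg_left (hg s) (M.stateDist_nonneg π hπ t s)
  _ = K := by rw [← Finset.sum_mul, M.stateDist_sum_one π hπ, one_mul]

lemma summable_SE (π : S → A → ℝ) (hπ : IsPolicy π) (g : S → ℝ) :
    Summable (fun t => M.disc ^ t * M.SE π g t) :=
  summable_geom_bound M.disc_pos.le M.disc_lt_one _ _ (M.SE_abs_le π hπ g)

lemma SE_zero_eq (π : S → A → ℝ) (g : S → ℝ) : M.SE π g 0 = ∑ s, M.init s * g s := rfl

lemma SE_vOf (π h : S → A → ℝ) (t : ℕ) :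
    M.SE π (vOf π h) t = ∑ s, ∑ a, M.stateDist π t s * π s a * h s a := by
  unfold SE vOf
  apply Finset.sum_congr rfl; intro s _
  rw [Finset.mul_sum]; apply Finset.sum_congr rfl; intro a _; ring

/-- evaluation of occupancy-weighted expectations -/
lemma occ_eval (π : S → A → ℝ) (hπ : IsPolicy π) (h : S → A → ℝ) :
    ∑ s, ∑ a, M.occ π s a * h s a
      = (1 - M.disc) * ∑' t : ℕ, M.disc ^ t * M.SE π (vOf π h) t := by
  have hsummand : ∀ s a, Summable (fun t : ℕ =>
      M.disc ^ t * (M.stateDist π t s * π s a * h s a)) := by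
    intro s a
    apply summable_geom_bound M.disc_pos.le M.disc_lt_one _ (|π s a * h s a|)
    intro t
    rw [mul_assoc, abs_mul]
    apply mul_le_of_le_one_left (abs_nonneg _)
    rw [abs_of_nonneg (M.stateDist_nonneg π hπ t s)]
    exact M.stateDist_le_one π hπ t s
  have step1 : ∀ s a, M.occ π s a * h s a
      = (1 - M.disc) * ∑' t : ℕ, M.disc ^ t * (M.stateDist π t s * π s a * h s a) := by
    intro s a
    unfold FinMDP.occ
    rw [mul_assoc, ← tsum_mul_right]
    congr 1; apply tsum_congr; intro t; ring
  calc ∑ s, ∑ a, M.occ π s a * h s a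
      = ∑ s, ∑ a, (1 - M.disc) * ∑' t : ℕ, M.disc ^ t *
          (M.stateDist π t s * π s a * h s a) := by
        exact Finset.sum_congr rfl fun s _ => Finset.sum_congr rfl fun a _ => step1 s a
  _ = (1 - M.disc) * ∑ s, ∑ a, ∑' t : ℕ, M.disc ^ t *
          (M.stateDist π t s * π s a * h s a) := by
        rw [Finset.mul_sum]; apply Finset.sum_congr rfl; intro s _; rw [Finset.mul_sum]
  _ = (1 - M.disc) * ∑ s, ∑' t : ℕ, ∑ a, M.disc ^ t *
          (M.stateDist π t s * π s a * h s a) := by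
        congr 1; apply Finset.sum_congr rfl; intro s _
        exact (Summable.tsum_finsetSum (fun a _ => hsummand s a)).symm
  _ = (1 - M.disc) * ∑' t : ℕ, ∑ s, ∑ a, M.disc ^ t *
          (M.stateDist π t s * π s a * h s a) := by
        congr 1
        exact (Summable.tsum_finsetSum (fun s _ => summable_sum (fun a _ => hsummand s a))).symm
  _ = (1 - M.disc) * ∑' t : ℕ, M.disc ^ t * M.SE π (vOf π h) t := by
        congr 1; apply tsum_congr; intro t
        rw [M.SE_vOf, Finset.mul_sum]
        refine Finset.sum_congr rfl fun s _ => ?_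
        rw [Finset.mul_sum]

lemma SE_succ_eq (π : S → A → ℝ) (g : S → ℝ) (t : ℕ) :
    M.SE π g (t + 1)
      = ∑ s, ∑ a, M.stateDist π t s * π s a * ∑ s', M.P s a s' * g s' := by
  unfold SE
  simp only [FinMDP.stateDist]
  calc ∑ s', (∑ s, ∑ a, M.stateDist π t s * π s a * M.P s a s') * g s'
      = ∑ s', ∑ s, ∑ a, M.stateDist π t s * π s a * M.P s a s' * g s' := by
        refine Finset.sum_congr rfl fun s' _ => ?_
        rw [Finset.sum_mul]
        exact Finset.sum_congr rfl fun s _ => by rw [Finset.sum_mul]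
  _ = ∑ s, ∑ s', ∑ a, M.stateDist π t s * π s a * M.P s a s' * g s' := Finset.sum_comm
  _ = ∑ s, ∑ a, ∑ s', M.stateDist π t s * π s a * M.P s a s' * g s' :=
        Finset.sum_congr rfl fun s _ => Finset.sum_comm
  _ = ∑ s, ∑ a, M.stateDist π t s * π s a * ∑ s', M.P s a s' * g s' := by
        refine Finset.sum_congr rfl fun s _ => Finset.sum_congr rfl fun a _ => ?_
        rw [Finset.mul_sum]
        exact Finset.sum_congr rfl fun s' _ => by ring

lemma SE_bellman (π ρ f : S → A → ℝ) (t : ℕ) :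
    M.SE π (vOf π (M.bellman ρ f)) t
      = M.SE π (vOf π M.r) t + M.disc * M.SE π (vOf ρ f) (t + 1) := by
  rw [M.SE_vOf π (M.bellman ρ f) t, M.SE_vOf π M.r t, M.SE_succ_eq π (vOf ρ f) t]
  unfold FinMDP.bellman
  rw [Finset.mul_sum, ← Finset.sum_add_distrib]
  refine Finset.sum_congr rfl fun s _ => ?_
  rw [Finset.mul_sum, ← Finset.sum_add_distrib]
  refine Finset.sum_congr rfl fun a _ => ?_
  have : ∀ s', M.P s a s' * ∑ a', ρ s' a' * f s' a' = M.P s a s' * vOf ρ f s' :=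
    fun s' => rfl
  rw [Finset.sum_congr rfl fun s' _ => this s']
  ring

lemma SE_vOf_sub (π g h : S → A → ℝ) (t : ℕ) :
    M.SE π (vOf π (fun s a => g s a - h s a)) t
      = M.SE π (vOf π g) t - M.SE π (vOf π h) t := by
  unfold SE vOf
  rw [← Finset.sum_sub_distrib]
  refine Finset.sum_congr rfl fun s _ => ?_
  rw [← mul_sub, ← Finset.sum_sub_distrib]
  congr 1
  exact Finset.sum_congr rfl fun a _ => by ring

lemma value_eq (π : S → A → ℝ) (hπ : IsPolicy π) (Q : S → A → ℝ) (hQ : M.IsQ π Q) :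
    M.scalarV π Q = ∑' t : ℕ, M.disc ^ t * M.SE π (vOf π M.r) t := by
  set G : ℕ → ℝ := fun t => M.SE π (vOf π Q) t with hGdef
  set R : ℕ → ℝ := fun t => M.SE π (vOf π M.r) t with hRdef
  have hG : ∀ t, G t = R t + M.disc * G (t + 1) := by
    intro t
    have h1 : M.SE π (vOf π Q) t = M.SE π (vOf π (M.bellman π Q)) t := by
      unfold SE vOf
      refine Finset.sum_congr rfl fun s _ => ?_
      congr 1
      exact Finset.sum_congr rfl fun a _ => by rw [hQ s a]
    rw [hGdef]
    simp only
    rw [h1, M.SE_bellman π π Q t]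
  have key : ∑' t : ℕ, M.disc ^ t * (R t + M.disc * G (t + 1) - G t)
      = (∑' t : ℕ, M.disc ^ t * R t) - G 0 :=
    tsum_geom_telescope M.disc_pos.le M.disc_lt_one R G
      (∑ s, |vOf π M.r s|) (∑ s, |vOf π Q s|)
      (M.SE_abs_le π hπ _) (M.SE_abs_le π hπ _)
  have hzero : ∑' t : ℕ, M.disc ^ t * (R t + M.disc * G (t + 1) - G t) = 0 := by
    have : ∀ t : ℕ, M.disc ^ t * (R t + M.disc * G (t + 1) - G t) = 0 := by
      intro t; rw [← hG t]; ring
    rw [tsum_congr this, tsum_zero]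
  have : M.scalarV π Q = G 0 := (M.SE_zero_eq π (vOf π Q)).symm
  rw [this]
  linarith [key, hzero]

lemma pd_eq (π : S → A → ℝ) (hπ : IsPolicy π) (Q : S → A → ℝ) (hQ : M.IsQ π Q)
    (f : S → A → ℝ) :
    ∑ s, ∑ a, M.occ π s a * (M.bellman π f s a - f s a)
      = (1 - M.disc) * (M.scalarV π Q - ∑ s, M.init s * vOf π f s) := by
  rw [M.occ_eval π hπ _]
  congr 1
  set F : ℕ → ℝ := fun t => M.SE π (vOf π f) t with hFdef
  set R : ℕ → ℝ := fun t => M.SE π (vOf π M.r) t with hRdef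
  have h1 : ∀ t : ℕ, M.SE π (vOf π (fun s a => M.bellman π f s a - f s a)) t
      = R t + M.disc * F (t + 1) - F t := by
    intro t
    rw [M.SE_vOf_sub, M.SE_bellman π π f t]
  have key : ∑' t : ℕ, M.disc ^ t * (R t + M.disc * F (t + 1) - F t)
      = (∑' t : ℕ, M.disc ^ t * R t) - F 0 :=
    tsum_geom_telescope M.disc_pos.le M.disc_lt_one R F
      (∑ s, |vOf π M.r s|) (∑ s, |vOf π f s|)
      (M.SE_abs_le π hπ _) (M.SE_abs_le π hπ _)
  rw [tsum_congr (fun t => by rw [h1 t]), key, ← M.value_eq π hπ Q hQ]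
  congr 1

lemma shift_eq (π : S → A → ℝ) (hπ : IsPolicy π) (g : S → ℝ) :
    ∑ s, ∑ a, M.occ π s a * (M.disc * ∑ s', M.P s a s' * g s')
      = (1 - M.disc) * ((∑' t : ℕ, M.disc ^ t * M.SE π g t) - ∑ s, M.init s * g s) := by
  rw [M.occ_eval π hπ _]
  congr 1
  have h1 : ∀ t : ℕ, M.SE π (vOf π (fun s a => M.disc * ∑ s', M.P s a s' * g s')) t
      = M.disc * M.SE π g (t + 1) := by
    intro t
    rw [M.SE_vOf, M.SE_succ_eq π g t, Finset.mul_sum]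
    refine Finset.sum_congr rfl fun s _ => ?_
    rw [Finset.mul_sum]
    exact Finset.sum_congr rfl fun a _ => by ring
  rw [tsum_congr (fun t => by rw [h1 t])]
  have h2 : ∀ t : ℕ, M.disc ^ t * (M.disc * M.SE π g (t + 1))
      = M.disc ^ (t + 1) * M.SE π g (t + 1) := fun t => by rw [pow_succ]; ring
  rw [tsum_congr h2]
  have h3 := Summable.tsum_eq_zero_add (M.summable_SE π hπ g)
  rw [pow_zero, one_mul, M.SE_zero_eq] at h3
  linarith

lemma exp_quad {x : ℝ} (h0 : 0 ≤ x) (h1 : x ≤ 1) : Real.exp x ≤ 1 + x + x ^ 2 := by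
  have hb := Real.exp_bound (x := x) (by rw [abs_of_nonneg h0]; exact h1) (n := 3) (by norm_num)
  have : ∑ m ∈ Finset.range 3, x ^ m / (m.factorial : ℝ) = 1 + x + x ^ 2 / 2 := by
    rw [Finset.sum_range_succ, Finset.sum_range_succ, Finset.sum_range_one]
    norm_num [Nat.factorial]
  rw [this, abs_of_nonneg h0] at hb
  have h2 : |Real.exp x - (1 + x + x ^ 2 / 2)| ≤ x ^ 3 * (4 / 18) := by
    convert hb using 2
    norm_num [Nat.factorial]
  have h3 : x ^ 3 ≤ x ^ 2 := pow_le_pow_of_le_one h0 h1 (by norm_num)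
  have := abs_le.mp h2
  nlinarith [sq_nonneg x]

lemma telescope_Icc (g : ℕ → ℝ) (T : ℕ) :
    ∑ t ∈ Finset.Icc 1 T, (g (t + 1) - g t) = g (T + 1) - g 1 := by
  induction T with
  | zero => simp
  | succ T ih =>
      rw [← Finset.Ico_add_one_right_eq_Icc] at ih ⊢
      rw [Finset.sum_Ico_succ_top (by omega), ih]
      ring

lemma hedge_regret {A : Type*} [Fintype A] [Nonempty A] (T : ℕ) (η B : ℝ)
    (hη : 0 < η) (hB : 0 ≤ B) (hηB : η * B ≤ 1)
    (F : ℕ → A → ℝ) (hF0 : ∀ t ∈ Finset.Icc 1 T, ∀ a, 0 ≤ F t a)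
    (hFB : ∀ t ∈ Finset.Icc 1 T, ∀ a, F t a ≤ B)
    (p : A → ℝ) (hp0 : ∀ a, 0 ≤ p a) (hp1 : ∑ a, p a = 1) :
    ∑ t ∈ Finset.Icc 1 T, ((∑ a, p a * F t a)
        - ∑ a, (Real.exp (η * ∑ τ ∈ Finset.Ico 1 t, F τ a)
            / ∑ a', Real.exp (η * ∑ τ ∈ Finset.Ico 1 t, F τ a')) * F t a)
      ≤ Real.log (Fintype.card A) / η + η * T * B ^ 2 := by
  set Sc : ℕ → A → ℝ := fun t a => ∑ τ ∈ Finset.Ico 1 t, F τ a with hSc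
  set Z : ℕ → ℝ := fun t => ∑ a, Real.exp (η * Sc t a) with hZ
  have hZpos : ∀ t, 0 < Z t :=
    fun t => Finset.sum_pos (fun a _ => Real.exp_pos _) Finset.univ_nonempty
  -- step inequality
  have hstep : ∀ t ∈ Finset.Icc 1 T,
      Real.log (Z (t + 1)) - Real.log (Z t)
        ≤ η * (∑ a, (Real.exp (η * Sc t a) / Z t) * F t a) + η ^ 2 * B ^ 2 := by
    intro t ht
    rw [Finset.mem_Icc] at ht
    have hSsucc : ∀ a, Sc (t + 1) a = Sc t a + F t a := by
      intro a
      simp only [hSc]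
      rw [Finset.sum_Ico_succ_top (by omega)]
    have hZsucc : Z (t + 1) = Z t * ∑ a, (Real.exp (η * Sc t a) / Z t) * Real.exp (η * F t a) := by
      rw [Finset.mul_sum]
      simp only [hZ]
      refine Finset.sum_congr rfl fun a _ => ?_
      rw [hSsucc a, mul_add, Real.exp_add]
      field_simp
    have hwsum : ∑ a, Real.exp (η * Sc t a) / Z t = 1 := by
      rw [← Finset.sum_div, div_self (hZpos t).ne']
    have hexp : ∀ a, Real.exp (η * F t a) ≤ 1 + η * F t a + η ^ 2 * B ^ 2 := by
      intro a
      have h0 : 0 ≤ η * F t a := mul_nonneg hη.le (hF0 t (Finset.mem_Icc.mpr ht) a)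
      have h1 : η * F t a ≤ 1 := by
        calc η * F t a ≤ η * B :=
          mul_le_mul_of_nonneg_left (hFB t (Finset.mem_Icc.mpr ht) a) hη.le
        _ ≤ 1 := hηB
      calc Real.exp (η * F t a) ≤ 1 + η * F t a + (η * F t a) ^ 2 := exp_quad h0 h1
      _ ≤ 1 + η * F t a + η ^ 2 * B ^ 2 := by
          have : (η * F t a) ^ 2 ≤ (η * B) ^ 2 := by
            apply sq_le_sq' (by nlinarith) (by nlinarith [hFB t (Finset.mem_Icc.mpr ht) a])
          nlinarith
    have hZle : Z (t + 1) ≤ Z t * (1 + η * (∑ a, (Real.exp (η * Sc t a) / Z t) * F t a)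
        + η ^ 2 * B ^ 2) := by
      rw [hZsucc]
      apply mul_le_mul_of_nonneg_left _ (hZpos t).le
      calc ∑ a, (Real.exp (η * Sc t a) / Z t) * Real.exp (η * F t a)
          ≤ ∑ a, (Real.exp (η * Sc t a) / Z t) * (1 + η * F t a + η ^ 2 * B ^ 2) := by
            apply Finset.sum_le_sum
            intro a _
            exact mul_le_mul_of_nonneg_left (hexp a)
              (div_nonneg (Real.exp_pos _).le (hZpos t).le)
      _ = 1 + η * (∑ a, (Real.exp (η * Sc t a) / Z t) * F t a) + η ^ 2 * B ^ 2 := by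
            rw [Finset.mul_sum]
            have expand : ∀ a, (Real.exp (η * Sc t a) / Z t) * (1 + η * F t a + η ^ 2 * B ^ 2)
                = Real.exp (η * Sc t a) / Z t
                  + η * ((Real.exp (η * Sc t a) / Z t) * F t a)
                  + (Real.exp (η * Sc t a) / Z t) * (η ^ 2 * B ^ 2) := fun a => by ring
            rw [Finset.sum_congr rfl fun a _ => expand a, Finset.sum_add_distrib,
              Finset.sum_add_distrib, hwsum, ← Finset.sum_mul, hwsum]
            ring
    have hpos2 : (0:ℝ) < 1 + η * (∑ a, (Real.exp (η * Sc t a) / Z t) * F t a) + η ^ 2 * B ^ 2 := by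
      have : 0 ≤ ∑ a, (Real.exp (η * Sc t a) / Z t) * F t a :=
        Finset.sum_nonneg fun a _ => mul_nonneg (div_nonneg (Real.exp_pos _).le (hZpos t).le)
          (hF0 t (Finset.mem_Icc.mpr ht) a)
      positivity
    calc Real.log (Z (t + 1)) - Real.log (Z t)
        ≤ Real.log (Z t * (1 + η * (∑ a, (Real.exp (η * Sc t a) / Z t) * F t a)
            + η ^ 2 * B ^ 2)) - Real.log (Z t) := by
          have := Real.log_le_log (hZpos (t+1)) hZle
          linarith
    _ = Real.log (1 + η * (∑ a, (Real.exp (η * Sc t a) / Z t) * F t a) + η ^ 2 * B ^ 2) := by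
          rw [Real.log_mul (hZpos t).ne' hpos2.ne']
          ring
    _ ≤ η * (∑ a, (Real.exp (η * Sc t a) / Z t) * F t a) + η ^ 2 * B ^ 2 := by
          have := Real.log_le_sub_one_of_pos hpos2
          linarith
  -- telescoping
  have htel : Real.log (Z (T + 1)) - Real.log (Z 1)
      ≤ ∑ t ∈ Finset.Icc 1 T, (η * (∑ a, (Real.exp (η * Sc t a) / Z t) * F t a)
          + η ^ 2 * B ^ 2) := by
    rw [← telescope_Icc (fun t => Real.log (Z t)) T]
    exact Finset.sum_le_sum hstep
  -- Z 1 = card A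
  have hZ1 : Z 1 = Fintype.card A := by
    simp only [hZ, hSc]
    simp
  -- lower bound on log Z (T+1)
  have hlow : η * ∑ t ∈ Finset.Icc 1 T, (∑ a, p a * F t a) ≤ Real.log (Z (T + 1)) := by
    obtain ⟨a0, _, ha0⟩ := Finset.exists_max_image Finset.univ (Sc (T + 1)) Finset.univ_nonempty
    have h1 : ∑ a, p a * Sc (T + 1) a ≤ Sc (T + 1) a0 := by
      calc ∑ a, p a * Sc (T + 1) a ≤ ∑ a, p a * Sc (T + 1) a0 :=
        Finset.sum_le_sum fun a _ =>
          mul_le_mul_of_nonneg_left (ha0 a (Finset.mem_univ a)) (hp0 a)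
      _ = Sc (T + 1) a0 := by rw [← Finset.sum_mul, hp1, one_mul]
    have h2 : Real.exp (η * Sc (T + 1) a0) ≤ Z (T + 1) :=
      Finset.single_le_sum (f := fun a => Real.exp (η * Sc (T + 1) a))
        (fun a _ => (Real.exp_pos _).le) (Finset.mem_univ a0)
    have h3 : η * Sc (T + 1) a0 ≤ Real.log (Z (T + 1)) := by
      have := Real.log_le_log (Real.exp_pos _) h2
      rwa [Real.log_exp] at this
    have h4 : ∑ t ∈ Finset.Icc 1 T, (∑ a, p a * F t a) = ∑ a, p a * Sc (T + 1) a := by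
      rw [Finset.sum_comm]
      refine Finset.sum_congr rfl fun a _ => ?_
      rw [← Finset.mul_sum]
      simp only [hSc, Finset.Ico_add_one_right_eq_Icc]
    rw [h4]
    calc η * ∑ a, p a * Sc (T + 1) a ≤ η * Sc (T + 1) a0 :=
      mul_le_mul_of_nonneg_left h1 hη.le
    _ ≤ Real.log (Z (T + 1)) := h3
  -- combine
  have hcard : (Finset.Icc 1 T).card = T := by rw [Nat.card_Icc]; omega
  have hmain : η * ∑ t ∈ Finset.Icc 1 T, (∑ a, p a * F t a)
      ≤ Real.log (Fintype.card A)
        + η * ∑ t ∈ Finset.Icc 1 T, (∑ a, (Real.exp (η * Sc t a) / Z t) * F t a)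
        + η ^ 2 * T * B ^ 2 := by
    have := hlow.trans (by linarith [htel] :
      Real.log (Z (T + 1)) ≤ Real.log (Z 1)
        + ∑ t ∈ Finset.Icc 1 T, (η * (∑ a, (Real.exp (η * Sc t a) / Z t) * F t a)
            + η ^ 2 * B ^ 2))
    rw [hZ1, Finset.sum_add_distrib, Finset.sum_const, hcard, ← Finset.mul_sum,
      nsmul_eq_mul] at this
    push_cast at this ⊢
    linarith
  have hsplit : ∑ t ∈ Finset.Icc 1 T, ((∑ a, p a * F t a)
      - ∑ a, (Real.exp (η * Sc t a) / Z t) * F t a)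
      = (∑ t ∈ Finset.Icc 1 T, (∑ a, p a * F t a))
        - ∑ t ∈ Finset.Icc 1 T, (∑ a, (Real.exp (η * Sc t a) / Z t) * F t a) :=
    Finset.sum_sub_distrib _ _
  rw [hsplit]
  rw [div_add' _ _ _ hη.ne', le_div_iff₀ hη]
  nlinarith [hmain]
end FinMDP

lemma pi_explicit {S A : Type*} [Fintype S] [Fintype A] [Nonempty A]
    (T : ℕ) (η : ℝ) (f : ℕ → S → A → ℝ) (π : ℕ → S → A → ℝ)
    (hπ1 : ∀ s a, π 1 s a = 1 / Fintype.card A)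
    (hupd : ∀ t, 1 ≤ t → t < T → ∀ s a,
      π (t + 1) s a =
        π t s a * Real.exp (η * f t s a) / ∑ a', π t s a' * Real.exp (η * f t s a')) :
    ∀ t, 1 ≤ t → t ≤ T → ∀ s a,
      π t s a = Real.exp (η * ∑ τ ∈ Finset.Ico 1 t, f τ s a)
        / ∑ a', Real.exp (η * ∑ τ ∈ Finset.Ico 1 t, f τ s a') := by
  intro t ht1
  induction t, ht1 using Nat.le_induction with
  | base =>
      intro _ s a
      simp [hπ1, Finset.Ico_self]
  | succ t ht ih =>
      intro htT s a
      have hlt : t < T := by omega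
      have hform := ih (by omega)
      have hZpos : (0:ℝ) < ∑ a', Real.exp (η * ∑ τ ∈ Finset.Ico 1 t, f τ s a') :=
        Finset.sum_pos (fun a' _ => Real.exp_pos _) Finset.univ_nonempty
      have hnum : ∀ b, π t s b * Real.exp (η * f t s b)
          = Real.exp (η * ∑ τ ∈ Finset.Ico 1 (t + 1), f τ s b)
            / ∑ a', Real.exp (η * ∑ τ ∈ Finset.Ico 1 t, f τ s a') := by
        intro b
        rw [hform s b, Finset.sum_Ico_succ_top (by omega), mul_add, Real.exp_add]
        ring
      rw [hupd t ht hlt s a, hnum a, Finset.sum_congr rfl (fun a' _ => hnum a'),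
        ← Finset.sum_div, div_div_div_cancel_right₀ hZpos.ne']

lemma pi_is_policy {S A : Type*} [Fintype S] [Fintype A] [Nonempty A]
    (T : ℕ) (η : ℝ) (f : ℕ → S → A → ℝ) (π : ℕ → S → A → ℝ)
    (hπ1 : ∀ s a, π 1 s a = 1 / Fintype.card A)
    (hupd : ∀ t, 1 ≤ t → t < T → ∀ s a,
      π (t + 1) s a =
        π t s a * Real.exp (η * f t s a) / ∑ a', π t s a' * Real.exp (η * f t s a'))
    (t : ℕ) (ht1 : 1 ≤ t) (htT : t ≤ T) : IsPolicy (π t) := by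
  have hform := pi_explicit T η f π hπ1 hupd t ht1 htT
  constructor
  · intro s a
    rw [hform s a]
    positivity
  · intro s
    have hZpos : (0:ℝ) < ∑ a', Real.exp (η * ∑ τ ∈ Finset.Ico 1 t, f τ s a') :=
      Finset.sum_pos (fun a' _ => Real.exp_pos _) Finset.univ_nonempty
    rw [Finset.sum_congr rfl (fun a _ => hform s a), ← Finset.sum_div,
      div_self hZpos.ne']

namespace FinMDP
variable (M : FinMDP S A)

lemma occ_ge (π : S → A → ℝ) (hπ : IsPolicy π) (s : S) (a : A) :
    (1 - M.disc) * (M.init s * π s a) ≤ M.occ π s a := by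
  unfold FinMDP.occ
  apply mul_le_mul_of_nonneg_left _ (M.one_sub_disc_pos).le
  have hsum : Summable (fun t : ℕ => M.disc ^ t * M.stateDist π t s * π s a) := by
    have : ∀ t : ℕ, M.disc ^ t * M.stateDist π t s * π s a
        = M.disc ^ t * (M.stateDist π t s * π s a) := fun t => by ring
    rw [funext this]
    apply summable_geom_bound M.disc_pos.le M.disc_lt_one _ (π s a)
    intro t
    rw [abs_mul, abs_of_nonneg (M.stateDist_nonneg π hπ t s), abs_of_nonneg (hπ.1 s a)]
    apply mul_le_of_le_one_left (hπ.1 s a)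
    exact M.stateDist_le_one π hπ t s
  have h0 : M.disc ^ 0 * M.stateDist π 0 s * π s a = M.init s * π s a := by
    simp [FinMDP.stateDist]
  rw [← h0]
  exact Summable.le_tsum hsum 0 (fun t _ =>
    mul_nonneg (mul_nonneg (pow_nonneg M.disc_pos.le t) (M.stateDist_nonneg π hπ t s))
      (hπ.1 s a))

lemma onpol_bound (π : S → A → ℝ) (hπ : IsPolicy π) (Q fQ : S → A → ℝ) (Δon : ℝ)
    (hon : ∑ s, ∑ a, M.occ π s a * (fQ s a - Q s a) ^ 2 ≤ Δon) :
    (∑ s, M.init s * vOf π fQ s) - M.scalarV π Q ≤ Real.sqrt (Δon / (1 - M.disc)) := by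
  have h1γ := M.one_sub_disc_pos
  set W : S × A → ℝ := fun p => M.init p.1 * π p.1 p.2 with hW
  set x : S × A → ℝ := fun p => fQ p.1 p.2 - Q p.1 p.2 with hx
  have hW0 : ∀ p, 0 ≤ W p := fun p => mul_nonneg (M.init_nonneg p.1) (hπ.1 p.1 p.2)
  have hW1 : ∑ p : S × A, W p = 1 := by
    rw [Fintype.sum_prod_type]
    have : ∀ s, ∑ a, M.init s * π s a = M.init s := by
      intro s; rw [← Finset.mul_sum, hπ.2, mul_one]
    simp only [hW]
    rw [Finset.sum_congr rfl fun s _ => this s, M.init_sum]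
  have hLHS : (∑ s, M.init s * vOf π fQ s) - M.scalarV π Q = ∑ p : S × A, W p * x p := by
    unfold FinMDP.scalarV vOf
    rw [Fintype.sum_prod_type, ← Finset.sum_sub_distrib]
    refine Finset.sum_congr rfl fun s _ => ?_
    rw [← mul_sub, ← Finset.sum_sub_distrib, Finset.mul_sum]
    exact Finset.sum_congr rfl fun a _ => by simp only [hW, hx]; ring
  have hCS : (∑ p : S × A, W p * x p) ^ 2 ≤ ∑ p : S × A, W p * x p ^ 2 := by
    have := Finset.sum_mul_sq_le_sq_mul_sq Finset.univ
      (fun p : S × A => Real.sqrt (W p)) (fun p => Real.sqrt (W p) * x p)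
    have e1 : ∀ p : S × A, Real.sqrt (W p) * (Real.sqrt (W p) * x p) = W p * x p := by
      intro p; rw [← mul_assoc, Real.mul_self_sqrt (hW0 p)]
    have e2 : ∀ p : S × A, Real.sqrt (W p) ^ 2 = W p := fun p => Real.sq_sqrt (hW0 p)
    have e3 : ∀ p : S × A, (Real.sqrt (W p) * x p) ^ 2 = W p * x p ^ 2 := by
      intro p; rw [mul_pow, e2 p]
    rw [Finset.sum_congr rfl fun p _ => e1 p, Finset.sum_congr rfl fun p _ => e2 p,
      Finset.sum_congr rfl fun p _ => e3 p, hW1, one_mul] at this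
    exact this
  have hocc : ∑ p : S × A, W p * x p ^ 2 ≤ Δon / (1 - M.disc) := by
    rw [le_div_iff₀ h1γ]
    calc (∑ p : S × A, W p * x p ^ 2) * (1 - M.disc)
        = ∑ p : S × A, (1 - M.disc) * W p * x p ^ 2 := by
          rw [Finset.sum_mul]; exact Finset.sum_congr rfl fun p _ => by ring
    _ ≤ ∑ p : S × A, M.occ π p.1 p.2 * x p ^ 2 := by
          apply Finset.sum_le_sum
          intro p _
          exact mul_le_mul_of_nonneg_right (M.occ_ge π hπ p.1 p.2) (sq_nonneg _)
    _ = ∑ s, ∑ a, M.occ π s a * (fQ s a - Q s a) ^ 2 := Fintype.sum_prod_type _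
    _ ≤ Δon := hon
  rw [hLHS]
  calc ∑ p : S × A, W p * x p ≤ |∑ p : S × A, W p * x p| := le_abs_self _
  _ = Real.sqrt ((∑ p : S × A, W p * x p) ^ 2) := (Real.sqrt_sq_eq_abs _).symm
  _ ≤ Real.sqrt (Δon / (1 - M.disc)) := Real.sqrt_le_sqrt (hCS.trans hocc)
end FinMDP

namespace FinMDP
variable (M : FinMDP S A)

lemma decomp (π : S → A → ℝ) (hπ : IsPolicy π) (Q : S → A → ℝ) (hQ : M.IsQ π Q)
    (πe : S → A → ℝ) (hπe : IsPolicy πe) (Qe : S → A → ℝ) (hQe : M.IsQ πe Qe)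
    (f : S → A → ℝ) :
    M.scalarV πe Qe - M.scalarV π Q
      = (∑ s, ∑ a, M.occ πe s a * (M.bellman π f s a - f s a)) / (1 - M.disc)
        + (∑' τ : ℕ, M.disc ^ τ * M.SE πe (fun s => vOf πe f s - vOf π f s) τ)
        + ((∑ s, M.init s * vOf π f s) - M.scalarV π Q) := by
  have h1γ := M.one_sub_disc_pos
  set g : S → ℝ := fun s => vOf πe f s - vOf π f s with hg
  have E1 := M.pd_eq πe hπe Qe hQe f
  have E3 := M.shift_eq πe hπe g
  have hpt : ∀ s a, M.bellman πe f s a - f s a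
      = (M.bellman π f s a - f s a) + M.disc * ∑ s', M.P s a s' * g s' := by
    intro s a
    unfold FinMDP.bellman
    have : ∀ s', M.P s a s' * g s'
        = M.P s a s' * (∑ a', πe s' a' * f s' a') - M.P s a s' * (∑ a', π s' a' * f s' a') := by
      intro s'
      simp only [hg]
      unfold vOf
      ring
    rw [Finset.sum_congr rfl fun s' _ => this s', Finset.sum_sub_distrib]
    ring
  have E2 : ∑ s, ∑ a, M.occ πe s a * (M.bellman πe f s a - f s a)
      = (∑ s, ∑ a, M.occ πe s a * (M.bellman π f s a - f s a))
        + ∑ s, ∑ a, M.occ πe s a * (M.disc * ∑ s', M.P s a s' * g s') := by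
    rw [← Finset.sum_add_distrib]
    refine Finset.sum_congr rfl fun s _ => ?_
    rw [← Finset.sum_add_distrib]
    refine Finset.sum_congr rfl fun a _ => ?_
    rw [hpt s a]
    ring
  have hg0 : ∑ s, M.init s * g s
      = (∑ s, M.init s * vOf πe f s) - ∑ s, M.init s * vOf π f s := by
    rw [← Finset.sum_sub_distrib]
    exact Finset.sum_congr rfl fun s _ => by simp only [hg]; ring
  rw [E2] at E1
  rw [E3, hg0] at E1
  have key : (∑ s, ∑ a, M.occ πe s a * (M.bellman π f s a - f s a)) / (1 - M.disc)
      = M.scalarV πe Qe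
        - (∑' τ : ℕ, M.disc ^ τ * M.SE πe g τ)
        - ∑ s, M.init s * vOf π f s := by
    rw [div_eq_iff h1γ.ne']
    linarith [E1]
  rw [key]
  ring

end FinMDP

/-- Cumulative suboptimality of hybrid actor-critic under offline transfer
(deterministic form of the Bellman-complete case of Theorem 4.5). -/
theorem stmt15 (M : FinMDP S A) (hA : 2 ≤ Fintype.card A) (T : ℕ)
    (hT : 4 * Real.log (Fintype.card A) ≤ (T : ℝ))
    (η : ℝ) (hη : η = (1 - M.disc) * Real.sqrt (Real.log (Fintype.card A) / T))
    (ν : S → A → ℝ) (hν0 : ∀ s a, 0 ≤ ν s a) (hν1 : ∑ s, ∑ a, ν s a = 1)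
    (f : ℕ → S → A → ℝ)
    (hfmem : ∀ t ∈ Finset.Icc 1 T, ∀ s a, f t s a ∈ Set.Icc 0 (1 / (1 - M.disc)))
    (π : ℕ → S → A → ℝ)
    (hπ1 : ∀ s a, π 1 s a = 1 / Fintype.card A)
    (hupd : ∀ t, 1 ≤ t → t < T → ∀ s a,
      π (t + 1) s a =
        π t s a * Real.exp (η * f t s a) / ∑ a', π t s a' * Real.exp (η * f t s a'))
    (Q : ℕ → S → A → ℝ) (hQ : ∀ t ∈ Finset.Icc 1 T, M.IsQ (π t) (Q t))
    (πe Qe : S → A → ℝ) (hπe : IsPolicy πe) (hQe : M.IsQ πe Qe)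
    (Δon Δoff C : ℝ) (hC : 0 ≤ C)
    (hon : ∀ t ∈ Finset.Icc 1 T,
      ∑ s, ∑ a, M.occ (π t) s a * (f t s a - Q t s a) ^ 2 ≤ Δon)
    (hoff : ∀ t ∈ Finset.Icc 1 T,
      ∑ s, ∑ a, ν s a * (f t s a - M.bellman (π t) (f t) s a) ^ 2 ≤ Δoff)
    (htransfer : ∀ t ∈ Finset.Icc 1 T,
      ∑ s, ∑ a, M.occ πe s a * (M.bellman (π t) (f t) s a - f t s a)
        ≤ C * Real.sqrt (∑ s, ∑ a, ν s a * (M.bellman (π t) (f t) s a - f t s a) ^ 2)) :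
    ∑ t ∈ Finset.Icc 1 T, (M.scalarV πe Qe - M.scalarV (π t) (Q t))
      ≤ (T : ℝ) * Real.sqrt (Δon / (1 - M.disc))
        + (C * T / (1 - M.disc)) * Real.sqrt Δoff
        + (2 / (1 - M.disc) ^ 2) * Real.sqrt (Real.log (Fintype.card A) * T) := by
  have h1γ := M.one_sub_disc_pos
  set L : ℝ := Real.log (Fintype.card A) with hLdef
  have hL0 : 0 < L := by
    apply Real.log_pos
    have : (2:ℝ) ≤ Fintype.card A := by exact_mod_cast hA
    linarith
  have hT0 : (0:ℝ) < T := by linarith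
  have hη0 : 0 < η := by
    rw [hη]
    exact mul_pos h1γ (Real.sqrt_pos.mpr (div_pos hL0 hT0))
  set B : ℝ := 1 / (1 - M.disc) with hBdef
  have hB0 : 0 ≤ B := by positivity
  have hηB : η * B ≤ 1 := by
    have e : η * B = Real.sqrt (L / T) := by
      rw [hη, hBdef]
      field_simp
    rw [e]
    rw [show (1:ℝ) = Real.sqrt 1 from Real.sqrt_one.symm]
    apply Real.sqrt_le_sqrt
    rw [div_le_one hT0]
    linarith
  have hpol : ∀ t ∈ Finset.Icc 1 T, IsPolicy (π t) := fun t ht =>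
    pi_is_policy T η f π hπ1 hupd t (Finset.mem_Icc.1 ht).1 (Finset.mem_Icc.1 ht).2
  have hform := pi_explicit T η f π hπ1 hupd
  set RB : ℝ := L / η + η * T * B ^ 2 with hRBdef
  -- per-state hedge regret
  have hreg : ∀ s, ∑ t ∈ Finset.Icc 1 T, (vOf πe (f t) s - vOf (π t) (f t) s) ≤ RB := by
    intro s
    have hH := FinMDP.hedge_regret (A := A) T η B hη0 hB0 hηB (fun t a => f t s a)
      (fun t ht a => (hfmem t ht s a).1) (fun t ht a => (hfmem t ht s a).2)
      (fun a => πe s a) (fun a => hπe.1 s a) (hπe.2 s)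
    refine le_trans (le_of_eq ?_) hH
    refine Finset.sum_congr rfl fun t ht => ?_
    obtain ⟨ht1, htT⟩ := Finset.mem_Icc.1 ht
    congr 1
    unfold vOf
    exact Finset.sum_congr rfl fun a _ => by rw [hform t ht1 htT s a]
  -- mix bound
  have hmix : ∑ t ∈ Finset.Icc 1 T,
      (∑' τ : ℕ, M.disc ^ τ * M.SE πe (fun s => vOf πe (f t) s - vOf (π t) (f t) s) τ)
      ≤ RB * (1 - M.disc)⁻¹ := by
    rw [← Summable.tsum_finsetSum (fun t _ => M.summable_SE πe hπe _)]
    have hswap : ∀ τ : ℕ, ∑ t ∈ Finset.Icc 1 T,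
        M.disc ^ τ * M.SE πe (fun s => vOf πe (f t) s - vOf (π t) (f t) s) τ
        = M.disc ^ τ * M.SE πe
            (fun s => ∑ t ∈ Finset.Icc 1 T, (vOf πe (f t) s - vOf (π t) (f t) s)) τ := by
      intro τ
      rw [← Finset.mul_sum]
      congr 1
      unfold FinMDP.SE
      rw [Finset.sum_comm]
      exact Finset.sum_congr rfl fun s _ => by rw [Finset.mul_sum]
    calc ∑' τ : ℕ, ∑ t ∈ Finset.Icc 1 T,
        M.disc ^ τ * M.SE πe (fun s => vOf πe (f t) s - vOf (π t) (f t) s) τ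
        = ∑' τ : ℕ, M.disc ^ τ * M.SE πe
            (fun s => ∑ t ∈ Finset.Icc 1 T, (vOf πe (f t) s - vOf (π t) (f t) s)) τ :=
          tsum_congr hswap
    _ ≤ ∑' τ : ℕ, M.disc ^ τ * RB := by
          apply Summable.tsum_le_tsum _ (M.summable_SE πe hπe _)
            ((summable_geometric_of_lt_one M.disc_pos.le M.disc_lt_one).mul_right RB)
          intro τ
          exact mul_le_mul_of_nonneg_left (M.SE_le πe hπe _ RB hreg τ)
            (pow_nonneg M.disc_pos.le τ)
    _ = RB * (1 - M.disc)⁻¹ := by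
          rw [tsum_mul_right, tsum_geometric_of_lt_one M.disc_pos.le M.disc_lt_one]
          ring
  -- arithmetic identity
  have harith : RB * (1 - M.disc)⁻¹ = (2 / (1 - M.disc) ^ 2) * Real.sqrt (L * T) := by
    have hLs : Real.sqrt L * Real.sqrt L = L := Real.mul_self_sqrt hL0.le
    have hTs : Real.sqrt (T:ℝ) * Real.sqrt (T:ℝ) = (T:ℝ) := Real.mul_self_sqrt hT0.le
    have hsL : 0 < Real.sqrt L := Real.sqrt_pos.mpr hL0
    have hsT : 0 < Real.sqrt (T:ℝ) := Real.sqrt_pos.mpr hT0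
    have alg : ∀ d sl st Lv Tv : ℝ, 0 < d → 0 < sl → 0 < st → sl * sl = Lv →
        st * st = Tv →
        (Lv / (d * (sl / st)) + d * (sl / st) * Tv * (1 / d) ^ 2) * d⁻¹
          = 2 / d ^ 2 * (sl * st) := by
      intro d sl st Lv Tv hd hsl hst hLv hTv
      subst hLv hTv
      field_simp
      ring
    rw [hRBdef, hη, hBdef, Real.sqrt_div hL0.le, Real.sqrt_mul hL0.le]
    exact alg (1 - M.disc) (Real.sqrt L) (Real.sqrt (T:ℝ)) L (T:ℝ) h1γ hsL hsT hLs hTs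
  -- per-t bound for transfer + onpol parts
  have hper : ∀ t ∈ Finset.Icc 1 T,
      (∑ s, ∑ a, M.occ πe s a * (M.bellman (π t) (f t) s a - f t s a)) / (1 - M.disc)
        + ((∑ s, M.init s * vOf (π t) (f t) s) - M.scalarV (π t) (Q t))
      ≤ C * Real.sqrt Δoff / (1 - M.disc) + Real.sqrt (Δon / (1 - M.disc)) := by
    intro t ht
    have htr : (∑ s, ∑ a, M.occ πe s a * (M.bellman (π t) (f t) s a - f t s a))
        ≤ C * Real.sqrt Δoff := by
      refine (htransfer t ht).trans ?_
      apply mul_le_mul_of_nonneg_left _ hC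
      apply Real.sqrt_le_sqrt
      have h := hoff t ht
      calc ∑ s, ∑ a, ν s a * (M.bellman (π t) (f t) s a - f t s a) ^ 2
          = ∑ s, ∑ a, ν s a * (f t s a - M.bellman (π t) (f t) s a) ^ 2 := by
            refine Finset.sum_congr rfl fun s _ => Finset.sum_congr rfl fun a _ => ?_
            ring
      _ ≤ Δoff := h
    have honp := M.onpol_bound (π t) (hpol t ht) (Q t) (f t) Δon (hon t ht)
    have hdiv : (∑ s, ∑ a, M.occ πe s a * (M.bellman (π t) (f t) s a - f t s a)) / (1 - M.disc)
        ≤ C * Real.sqrt Δoff / (1 - M.disc) := (div_le_div_iff_of_pos_right h1γ).mpr htr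
    linarith
  -- combine
  have hdecomp : ∀ t ∈ Finset.Icc 1 T,
      M.scalarV πe Qe - M.scalarV (π t) (Q t)
        = ((∑ s, ∑ a, M.occ πe s a * (M.bellman (π t) (f t) s a - f t s a)) / (1 - M.disc)
            + ((∑ s, M.init s * vOf (π t) (f t) s) - M.scalarV (π t) (Q t)))
          + (∑' τ : ℕ, M.disc ^ τ * M.SE πe (fun s => vOf πe (f t) s - vOf (π t) (f t) s) τ) := by
    intro t ht
    have := M.decomp (π t) (hpol t ht) (Q t) (hQ t ht) πe hπe Qe hQe (f t)
    linarith [this]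
  have hcard : (Finset.Icc 1 T).card = T := by rw [Nat.card_Icc]; omega
  calc ∑ t ∈ Finset.Icc 1 T, (M.scalarV πe Qe - M.scalarV (π t) (Q t))
      = ∑ t ∈ Finset.Icc 1 T,
          (((∑ s, ∑ a, M.occ πe s a * (M.bellman (π t) (f t) s a - f t s a)) / (1 - M.disc)
            + ((∑ s, M.init s * vOf (π t) (f t) s) - M.scalarV (π t) (Q t)))
          + (∑' τ : ℕ, M.disc ^ τ * M.SE πe (fun s => vOf πe (f t) s - vOf (π t) (f t) s) τ)) :=
        Finset.sum_congr rfl hdecomp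
  _ = (∑ t ∈ Finset.Icc 1 T,
          ((∑ s, ∑ a, M.occ πe s a * (M.bellman (π t) (f t) s a - f t s a)) / (1 - M.disc)
            + ((∑ s, M.init s * vOf (π t) (f t) s) - M.scalarV (π t) (Q t))))
        + ∑ t ∈ Finset.Icc 1 T,
          (∑' τ : ℕ, M.disc ^ τ * M.SE πe (fun s => vOf πe (f t) s - vOf (π t) (f t) s) τ) :=
        Finset.sum_add_distrib
  _ ≤ (∑ t ∈ Finset.Icc 1 T, (C * Real.sqrt Δoff / (1 - M.disc) + Real.sqrt (Δon / (1 - M.disc))))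
        + RB * (1 - M.disc)⁻¹ :=
        add_le_add (Finset.sum_le_sum hper) hmix
  _ = (T:ℝ) * (C * Real.sqrt Δoff / (1 - M.disc) + Real.sqrt (Δon / (1 - M.disc)))
        + (2 / (1 - M.disc) ^ 2) * Real.sqrt (L * T) := by
        rw [Finset.sum_const, hcard, nsmul_eq_mul, harith]
  _ = (T : ℝ) * Real.sqrt (Δon / (1 - M.disc))
        + (C * T / (1 - M.disc)) * Real.sqrt Δoff
        + (2 / (1 - M.disc) ^ 2) * Real.sqrt (L * T) := by ring
end

section
/- Parameterized NPG regret lemma: Let |A| = A ≥ 2, T ≥ 1, β > 0, W > 0, and η = √(2·log(A)/(β·W²·T)). Let θ ↦ π_θ be a policy parameterization over ℝ^d such that π_θ(a|s) > 0 for all θ, s, a; for each (s,a) the map θ ↦ log π_θ(a|s) is differentiable with gradient ∇_θ log π_θ(a|s) that is β-Lipschitz in θ; and Σ_a π_θ(a|s)·∇_θ log π_θ(a|s) = 0 for all θ and s. Let θ^1 be such that π_{θ^1}(·|s) is uniform on A for every s, let w^1, …, w^T ∈ ℝ^d with ‖w^t‖ ≤ W, and set θ^{t+1} = θ^t + η·w^t.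 Let f^1, …, f^T : S×A → ℝ be arbitrary and define g^t(s,a) = E_{a'∼π_{θ^t}(·|s)}[f^t(s,a')] + ⟨w^t, ∇_θ log π_{θ^t}(a|s)⟩. Then for any comparator policy π^e, Σ_{t=1}^T E_{(s,a)∼d^{π^e}}[g^t(s,a) − E_{a'∼π_{θ^t}(·|s)}[g^t(s,a')]] ≤ √(2·β·W²·log(A)·T). -/
open Finset

variable {S A : Type*} [Fintype S] [Fintype A] [Nonempty S] [Nonempty A]

/-- Quadratic upper/lower bound for a function with Lipschitz gradient. -/
lemma descent_aux {d : ℕ} (h : EuclideanSpace ℝ (Fin d) → ℝ)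
    (g : EuclideanSpace ℝ (Fin d) → EuclideanSpace ℝ (Fin d))
    (β : ℝ)
    (hg : ∀ θ, HasGradientAt h (g θ) θ)
    (hl : ∀ θ θ', ‖g θ - g θ'‖ ≤ β * ‖θ - θ'‖)
    (x v : EuclideanSpace ℝ (Fin d)) :
    (inner ℝ (g x) v : ℝ) - β / 2 * ‖v‖ ^ 2 ≤ h (x + v) - h x := by
  set c : ℝ → EuclideanSpace ℝ (Fin d) := fun t => x + t • v with hc
  have hcont : Continuous g := by
    have : LipschitzWith (Real.toNNReal β) g := by
      apply LipschitzWith.of_dist_le_mul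
      intro a b
      simp only [dist_eq_norm]
      calc ‖g a - g b‖ ≤ β * ‖a - b‖ := hl a b
        _ ≤ Real.toNNReal β * ‖a - b‖ := by
            gcongr; exact (Real.le_coe_toNNReal β)
    exact this.continuous
  have hcderiv : ∀ t : ℝ, HasDerivAt c v t := by
    intro t
    have : HasDerivAt (fun t : ℝ => t • v) ((1:ℝ) • v) t := (hasDerivAt_id t).smul_const v
    rw [one_smul] at this; exact this.const_add x
  have hq : ∀ t : ℝ, HasDerivAt (fun u => h (c u)) ((inner ℝ (g (c t)) v : ℝ)) t := by
    intro t
    have := ((hg (c t)).hasFDerivAt.comp_hasDerivAt t (hcderiv t))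
    simp at this; exact this
  have hqcont : Continuous fun t : ℝ => (inner ℝ (g (c t)) v : ℝ) := by
    apply Continuous.inner
    · exact hcont.comp (continuous_const.add (continuous_id.smul continuous_const))
    · exact continuous_const
  have hint : ∫ t in (0:ℝ)..1, (inner ℝ (g (c t)) v : ℝ) = h (x + v) - h x := by
    have := intervalIntegral.integral_eq_sub_of_hasDerivAt (f := fun u => h (c u))
      (f' := fun t => (inner ℝ (g (c t)) v : ℝ)) (a := 0) (b := 1)
      (fun t _ => hq t) (hqcont.intervalIntegrable 0 1)
    simpa [hc] using this
  rw [← hint]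
  have hlow : ∀ t ∈ Set.Icc (0:ℝ) 1, (inner ℝ (g x) v : ℝ) - β * t * ‖v‖^2 ≤ (inner ℝ (g (c t)) v : ℝ) := by
    intro t ht
    have h1 : |(inner ℝ (g (c t) - g x) v : ℝ)| ≤ β * t * ‖v‖^2 := by
      calc |(inner ℝ (g (c t) - g x) v : ℝ)| ≤ ‖g (c t) - g x‖ * ‖v‖ := abs_real_inner_le_norm _ _
        _ ≤ (β * ‖c t - x‖) * ‖v‖ := by gcongr; exact hl _ _
        _ = β * t * ‖v‖^2 := by
            have : ‖c t - x‖ = t * ‖v‖ := by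
              simp [hc, norm_smul, abs_of_nonneg ht.1]
            rw [this]; ring
    have h2 : (inner ℝ (g (c t)) v : ℝ) = (inner ℝ (g x) v : ℝ) + (inner ℝ (g (c t) - g x) v : ℝ) := by
      rw [inner_sub_left]; ring
    nlinarith [neg_abs_le ((inner ℝ (g (c t) - g x) v : ℝ)), h1]
  have hmono : ∫ t in (0:ℝ)..1, ((inner ℝ (g x) v : ℝ) - β * t * ‖v‖^2)
      ≤ ∫ t in (0:ℝ)..1, (inner ℝ (g (c t)) v : ℝ) := by
    apply intervalIntegral.integral_mono_on (by norm_num)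
    · exact (Continuous.intervalIntegrable (continuous_const.sub ((continuous_const.mul continuous_id).mul continuous_const)) 0 1)
    · exact hqcont.intervalIntegrable 0 1
    · exact hlow
  have hval : ∫ t in (0:ℝ)..1, ((inner ℝ (g x) v : ℝ) - β * t * ‖v‖^2)
      = (inner ℝ (g x) v : ℝ) - β / 2 * ‖v‖^2 := by
    have h1 : ∫ t in (0:ℝ)..1, β * t * ‖v‖^2 = β / 2 * ‖v‖^2 := by
      have he : (fun t : ℝ => β * t * ‖v‖^2) = fun t : ℝ => (β * ‖v‖^2) * t := by ext t; ring
      rw [he, intervalIntegral.integral_const_mul, integral_id]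
      ring
    rw [intervalIntegral.integral_sub intervalIntegrable_const
      ((Continuous.intervalIntegrable (by fun_prop) 0 1)), h1,
      intervalIntegral.integral_const]
    simp
  linarith

/-- Telescoping sum over `Icc 1 T`. -/
lemma telescope_Icc (u : ℕ → ℝ) (T : ℕ) :
    ∑ t ∈ Finset.Icc 1 T, (u t - u (t + 1)) = u 1 - u (T + 1) := by
  induction T with
  | zero => simp
  | succ n ih =>
    rw [Finset.sum_Icc_succ_top (by omega), ih]; ring

/-- Parameterized NPG regret lemma. -/
theorem stmt17 {d : ℕ} (M : FinMDP S A) (hA : 2 ≤ Fintype.card A) (T : ℕ) (hT : 1 ≤ T)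
    (β W : ℝ) (hβ : 0 < β) (hW : 0 < W)
    (η : ℝ)
    (hη : η = Real.sqrt (2 * Real.log (Fintype.card A) / (β * W ^ 2 * T)))
    (Pol : EuclideanSpace ℝ (Fin d) → S → A → ℝ)
    (hPolpos : ∀ θ s a, 0 < Pol θ s a)
    (hPolsum : ∀ θ s, ∑ a, Pol θ s a = 1)
    (G : EuclideanSpace ℝ (Fin d) → S → A → EuclideanSpace ℝ (Fin d))
    (hgrad : ∀ θ s a, HasGradientAt (fun θ' => Real.log (Pol θ' s a)) (G θ s a) θ)
    (hlip : ∀ s a θ θ', ‖G θ s a - G θ' s a‖ ≤ β * ‖θ - θ'‖)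
    (hzero : ∀ θ s, ∑ a, Pol θ s a • G θ s a = 0)
    (θseq : ℕ → EuclideanSpace ℝ (Fin d))
    (hθ1 : ∀ s a, Pol (θseq 1) s a = 1 / Fintype.card A)
    (w : ℕ → EuclideanSpace ℝ (Fin d))
    (hw : ∀ t ∈ Finset.Icc 1 T, ‖w t‖ ≤ W)
    (hupd : ∀ t, 1 ≤ t → t < T → θseq (t + 1) = θseq t + η • w t)
    (f : ℕ → S → A → ℝ)
    (g : ℕ → S → A → ℝ)
    (hg : ∀ t s a, g t s a =
      (∑ a', Pol (θseq t) s a' * f t s a') + (inner ℝ (w t) (G (θseq t) s a) : ℝ))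
    (πe : S → A → ℝ) (hπe : IsPolicy πe) :
    ∑ t ∈ Finset.Icc 1 T,
        ∑ s, ∑ a, M.occ πe s a * (g t s a - ∑ a', Pol (θseq t) s a' * g t s a')
      ≤ Real.sqrt (2 * β * W ^ 2 * Real.log (Fintype.card A) * T) := by
  classical
  set L := Real.log (Fintype.card A) with hLdef
  have hA1 : (1:ℝ) < (Fintype.card A : ℝ) := by exact_mod_cast lt_of_lt_of_le one_lt_two hA
  have hLpos : 0 < L := Real.log_pos hA1
  have hT0 : (0:ℝ) < (T:ℝ) := by exact_mod_cast hT
  have hη0 : 0 < η := by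
    rw [hη]; apply Real.sqrt_pos.mpr; positivity
  have hη2 : η ^ 2 = 2 * L / (β * W ^ 2 * (T:ℝ)) := by
    rw [hη, Real.sq_sqrt (by positivity)]
  have hkey : η ^ 2 * (β * W ^ 2 * (T:ℝ)) = 2 * L := by
    rw [hη2]; field_simp
  set B := η * (β * W ^ 2 * (T:ℝ)) with hBdef
  have hB0 : 0 ≤ B := by positivity
  have hRHS : Real.sqrt (2 * β * W ^ 2 * L * (T:ℝ)) = B := by
    have : 2 * β * W ^ 2 * L * (T:ℝ) = B ^ 2 := by
      have hB2 : B ^ 2 = η ^ 2 * (β * W ^ 2 * (T:ℝ)) * (β * W ^ 2 * (T:ℝ)) := by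
        rw [hBdef]; ring
      rw [hB2, hkey]; ring
    rw [this, Real.sqrt_sq hB0]
  -- the extended parameter sequence
  set φ : ℕ → EuclideanSpace ℝ (Fin d) :=
    fun t => if t ≤ T then θseq t else θseq T + η • w T with hφdef
  have hφt : ∀ t ∈ Finset.Icc 1 T, φ t = θseq t := by
    intro t ht
    simp only [Finset.mem_Icc] at ht
    simp [hφdef, ht.2]
  have hφstep : ∀ t ∈ Finset.Icc 1 T, φ (t + 1) = φ t + η • w t := by
    intro t ht
    simp only [Finset.mem_Icc] at ht
    rcases lt_or_eq_of_le ht.2 with hlt | heq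
    · have h1 : t + 1 ≤ T := hlt
      simp only [hφdef, if_pos h1, if_pos ht.2]
      exact hupd t ht.1 hlt
    · subst heq
      have h1 : ¬ (t + 1 ≤ t) := by omega
      simp [hφdef, h1]
  -- per-step inequality
  set Φ : ℕ → S → ℝ := fun t s => -∑ a, πe s a * Real.log (Pol (φ t) s a) with hΦdef
  have hstep : ∀ t ∈ Finset.Icc 1 T, ∀ s : S,
      η * ∑ a, πe s a * (inner ℝ (w t) (G (θseq t) s a) : ℝ)
        ≤ Φ t s - Φ (t + 1) s + η ^ 2 * β * W ^ 2 / 2 := by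
    intro t ht s
    have hpera : ∀ a : A, η * (inner ℝ (w t) (G (θseq t) s a) : ℝ)
        ≤ Real.log (Pol (φ (t+1)) s a) - Real.log (Pol (φ t) s a) + η ^ 2 * β * W ^ 2 / 2 := by
      intro a
      have hdes := descent_aux (fun θ' => Real.log (Pol θ' s a)) (fun θ => G θ s a) β
        (fun θ => hgrad θ s a) (fun θ θ' => hlip s a θ θ') (θseq t) (η • w t)
      have hiden : (inner ℝ (G (θseq t) s a) (η • w t) : ℝ)
          = η * (inner ℝ (w t) (G (θseq t) s a) : ℝ) := by
        rw [real_inner_smul_right, real_inner_comm]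
      have hnw : ‖η • w t‖ ^ 2 ≤ η ^ 2 * W ^ 2 := by
        rw [norm_smul, Real.norm_eq_abs, abs_of_pos hη0, mul_pow]
        exact mul_le_mul_of_nonneg_left
          (pow_le_pow_left₀ (norm_nonneg (w t)) (hw t ht) 2) (sq_nonneg η)
      rw [hφstep t ht, hφt t ht]
      rw [hiden] at hdes
      nlinarith [hdes, hβ.le]
    have hπnn := hπe.1
    have hsum1 := hπe.2 s
    calc η * ∑ a, πe s a * (inner ℝ (w t) (G (θseq t) s a) : ℝ)
        = ∑ a, πe s a * (η * (inner ℝ (w t) (G (θseq t) s a) : ℝ)) := by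
          rw [Finset.mul_sum]; exact Finset.sum_congr rfl fun a _ => by ring
      _ ≤ ∑ a, πe s a * (Real.log (Pol (φ (t+1)) s a) - Real.log (Pol (φ t) s a)
            + η ^ 2 * β * W ^ 2 / 2) := by
          exact Finset.sum_le_sum fun a _ => mul_le_mul_of_nonneg_left (hpera a) (hπnn s a)
      _ = Φ t s - Φ (t + 1) s + η ^ 2 * β * W ^ 2 / 2 := by
          simp only [hΦdef, mul_sub, mul_add, Finset.sum_add_distrib, Finset.sum_sub_distrib,
            ← Finset.sum_mul, hsum1]
          ring
  -- telescope and endpoint bounds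
  have htel : ∀ s : S, ∑ t ∈ Finset.Icc 1 T, (Φ t s - Φ (t + 1) s) = Φ 1 s - Φ (T + 1) s := by
    intro s
    exact telescope_Icc (fun t => Φ t s) T
  have hΦ1 : ∀ s : S, Φ 1 s = L := by
    intro s
    have hφ1 : φ 1 = θseq 1 := hφt 1 (by simp [hT])
    simp only [hΦdef, hφ1, hθ1]
    have : Real.log (1 / (Fintype.card A : ℝ)) = -L := by
      rw [one_div, Real.log_inv]
    rw [Finset.sum_congr rfl fun a _ => by rw [this]]
    simp [← Finset.sum_mul, hπe.2 s]
  have hΦend : ∀ s : S, 0 ≤ Φ (T + 1) s := by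
    intro s
    simp only [hΦdef, neg_nonneg]
    apply Finset.sum_nonpos
    intro a _
    apply mul_nonpos_of_nonneg_of_nonpos (hπe.1 s a)
    apply Real.log_nonpos (hPolpos _ s a).le
    calc Pol (φ (T+1)) s a ≤ ∑ a', Pol (φ (T+1)) s a' :=
          Finset.single_le_sum (fun a' _ => (hPolpos _ s a').le) (Finset.mem_univ a)
      _ = 1 := hPolsum _ s
  clear_value Φ
  clear_value φ
  -- per-state regret bound
  have hR : ∀ s : S, ∑ t ∈ Finset.Icc 1 T, ∑ a, πe s a * (inner ℝ (w t) (G (θseq t) s a) : ℝ) ≤ B := by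
    intro s
    have h1 : η * ∑ t ∈ Finset.Icc 1 T, ∑ a, πe s a * (inner ℝ (w t) (G (θseq t) s a) : ℝ)
        ≤ L + (T:ℝ) * (η ^ 2 * β * W ^ 2 / 2) := by
      calc η * ∑ t ∈ Finset.Icc 1 T, ∑ a, πe s a * (inner ℝ (w t) (G (θseq t) s a) : ℝ)
          = ∑ t ∈ Finset.Icc 1 T, η * ∑ a, πe s a * (inner ℝ (w t) (G (θseq t) s a) : ℝ) := by
            rw [Finset.mul_sum]
        _ ≤ ∑ t ∈ Finset.Icc 1 T, (Φ t s - Φ (t + 1) s + η ^ 2 * β * W ^ 2 / 2) :=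
            Finset.sum_le_sum fun t ht => hstep t ht s
        _ = (Φ 1 s - Φ (T + 1) s) + (T:ℝ) * (η ^ 2 * β * W ^ 2 / 2) := by
            rw [Finset.sum_add_distrib, htel s, Finset.sum_const, Nat.card_Icc]
            simp
        _ ≤ L + (T:ℝ) * (η ^ 2 * β * W ^ 2 / 2) := by
            rw [hΦ1 s]
            have := hΦend s
            linarith
    have h2 : L + (T:ℝ) * (η ^ 2 * β * W ^ 2 / 2) = η * B := by
      rw [hBdef]
      nlinarith [hkey]
    rw [h2] at h1
    exact le_of_mul_le_mul_left (by linarith) hη0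
  -- occupancy measure structure
  have hd0 : ∀ t s, 0 ≤ M.stateDist πe t s := by
    intro t
    induction t with
    | zero => exact M.init_nonneg
    | succ t ih =>
      intro s'
      show 0 ≤ ∑ s, ∑ a, M.stateDist πe t s * πe s a * M.P s a s'
      apply Finset.sum_nonneg; intro s _
      apply Finset.sum_nonneg; intro a _
      exact mul_nonneg (mul_nonneg (ih s) (hπe.1 s a)) (M.P_nonneg s a s')
  have hd1 : ∀ t, ∑ s, M.stateDist πe t s = 1 := by
    intro t
    induction t with
    | zero => exact M.init_sum
    | succ t ih =>
      show ∑ s', ∑ s, ∑ a, M.stateDist πe t s * πe s a * M.P s a s' = 1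
      rw [Finset.sum_comm]
      calc ∑ s, ∑ s', ∑ a, M.stateDist πe t s * πe s a * M.P s a s'
          = ∑ s, ∑ a, ∑ s', M.stateDist πe t s * πe s a * M.P s a s' := by
            exact Finset.sum_congr rfl fun s _ => Finset.sum_comm
        _ = ∑ s, ∑ a, M.stateDist πe t s * πe s a := by
            refine Finset.sum_congr rfl fun s _ => Finset.sum_congr rfl fun a _ => ?_
            rw [← Finset.mul_sum, M.P_sum s a, mul_one]
        _ = ∑ s, M.stateDist πe t s := by
            refine Finset.sum_congr rfl fun s _ => ?_
            rw [← Finset.mul_sum, hπe.2 s, mul_one]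
        _ = 1 := ih
  have hdle1 : ∀ t s, M.stateDist πe t s ≤ 1 := by
    intro t s
    calc M.stateDist πe t s ≤ ∑ s', M.stateDist πe t s' :=
          Finset.single_le_sum (fun s' _ => hd0 t s') (Finset.mem_univ s)
      _ = 1 := hd1 t
  have hsummable : ∀ s, Summable (fun t : ℕ => M.disc ^ t * M.stateDist πe t s) := by
    intro s
    apply Summable.of_nonneg_of_le
      (fun t => mul_nonneg (pow_nonneg M.disc_pos.le t) (hd0 t s))
      (fun t => ?_)
      (summable_geometric_of_lt_one M.disc_pos.le M.disc_lt_one)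
    calc M.disc ^ t * M.stateDist πe t s ≤ M.disc ^ t * 1 := by
          exact mul_le_mul_of_nonneg_left (hdle1 t s) (pow_nonneg M.disc_pos.le t)
      _ = M.disc ^ t := mul_one _
  set ν : S → ℝ := fun s => (1 - M.disc) * ∑' t : ℕ, M.disc ^ t * M.stateDist πe t s with hνdef
  have hocc : ∀ s a, M.occ πe s a = ν s * πe s a := by
    intro s a
    show (1 - M.disc) * ∑' t : ℕ, M.disc ^ t * M.stateDist πe t s * πe s a = _
    rw [tsum_mul_right, hνdef]
    ring
  have hν0 : ∀ s, 0 ≤ ν s := by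
    intro s
    apply mul_nonneg (by linarith [M.disc_lt_one])
    exact tsum_nonneg fun t => mul_nonneg (pow_nonneg M.disc_pos.le t) (hd0 t s)
  have hνsum : ∑ s, ν s = 1 := by
    rw [hνdef, ← Finset.mul_sum]
    have hswap : ∑ s, ∑' t : ℕ, M.disc ^ t * M.stateDist πe t s
        = ∑' t : ℕ, ∑ s, M.disc ^ t * M.stateDist πe t s := by
      exact (Summable.tsum_finsetSum fun s _ => hsummable s).symm
    rw [hswap]
    have : ∀ t : ℕ, ∑ s, M.disc ^ t * M.stateDist πe t s = M.disc ^ t := by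
      intro t
      rw [← Finset.mul_sum, hd1 t, mul_one]
    rw [tsum_congr this, tsum_geometric_of_lt_one M.disc_pos.le M.disc_lt_one]
    have h1 : (1:ℝ) - M.disc ≠ 0 := by linarith [M.disc_lt_one]
    field_simp
  -- simplification of g-differences
  have hsimp : ∀ t s a, g t s a - ∑ a', Pol (θseq t) s a' * g t s a'
      = (inner ℝ (w t) (G (θseq t) s a) : ℝ) := by
    intro t s a
    have hz : ∑ a', Pol (θseq t) s a' * (inner ℝ (w t) (G (θseq t) s a') : ℝ) = 0 := by
      have : ∀ a', Pol (θseq t) s a' * (inner ℝ (w t) (G (θseq t) s a') : ℝ)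
          = (inner ℝ (w t) (Pol (θseq t) s a' • G (θseq t) s a') : ℝ) := by
        intro a'; rw [real_inner_smul_right]
      rw [Finset.sum_congr rfl fun a' _ => this a', ← inner_sum, hzero, inner_zero_right]
    have hc : ∑ a', Pol (θseq t) s a' * g t s a'
        = ∑ a', Pol (θseq t) s a' * f t s a' := by
      calc ∑ a', Pol (θseq t) s a' * g t s a'
          = ∑ a', (Pol (θseq t) s a' * (∑ a'', Pol (θseq t) s a'' * f t s a'')
              + Pol (θseq t) s a' * (inner ℝ (w t) (G (θseq t) s a') : ℝ)) := by
            refine Finset.sum_congr rfl fun a' _ => ?_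
            rw [hg t s a']; ring
        _ = (∑ a', Pol (θseq t) s a') * (∑ a'', Pol (θseq t) s a'' * f t s a'')
              + ∑ a', Pol (θseq t) s a' * (inner ℝ (w t) (G (θseq t) s a') : ℝ) := by
            rw [Finset.sum_add_distrib, Finset.sum_mul]
        _ = ∑ a', Pol (θseq t) s a' * f t s a' := by
            rw [hPolsum, hz, one_mul, add_zero]
    rw [hc, hg t s a]
    ring
  -- put everything together
  calc ∑ t ∈ Finset.Icc 1 T,
        ∑ s, ∑ a, M.occ πe s a * (g t s a - ∑ a', Pol (θseq t) s a' * g t s a')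
      = ∑ t ∈ Finset.Icc 1 T, ∑ s, ν s * ∑ a, πe s a * (inner ℝ (w t) (G (θseq t) s a) : ℝ) := by
        refine Finset.sum_congr rfl fun t _ => Finset.sum_congr rfl fun s _ => ?_
        rw [Finset.mul_sum]
        refine Finset.sum_congr rfl fun a _ => ?_
        rw [hsimp t s a, hocc s a]; ring
    _ = ∑ s, ν s * ∑ t ∈ Finset.Icc 1 T, ∑ a, πe s a * (inner ℝ (w t) (G (θseq t) s a) : ℝ) := by
        rw [Finset.sum_comm]
        exact Finset.sum_congr rfl fun s _ => by rw [Finset.mul_sum]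
    _ ≤ ∑ s, ν s * B := Finset.sum_le_sum fun s _ => mul_le_mul_of_nonneg_left (hR s) (hν0 s)
    _ = B := by rw [← Finset.sum_mul, hνsum, one_mul]
    _ = Real.sqrt (2 * β * W ^ 2 * L * (T:ℝ)) := hRHS.symm
end

section
/- Bellman residual of the compatible linear critic: Let π be a policy of a finite discounted MDP, ν a probability distribution on S×A, f : S×A → ℝ, w ∈ ℝ^d, and φ : S×A → ℝ^d with Σ_a π(a|s)·φ(s,a) = 0 for every s. Define g(s,a) = E_{a'∼π(·|s)}[f(s,a')] + ⟨w, φ(s,a)⟩. If E_{ν}[(⟨w, φ(s,a)⟩ − f(s,a) + E_{a'∼π(·|s)}[f(s,a')])²] ≤ Δ_w and E_{ν}[(f − T^π f)²] ≤ Δ_off, then E_{(s,a)∼ν}[(g(s,a) − (T^π g)(s,a))²] ≤ 2·Δ_w + 2·Δ_off. -/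
open Finset

variable {S A : Type*} [Fintype S] [Fintype A] [Nonempty S] [Nonempty A]

/-- Bellman residual of the compatible linear critic. -/
theorem stmt18 {d : ℕ} (M : FinMDP S A) (π : S → A → ℝ) (hπ : IsPolicy π)
    (ν : S → A → ℝ) (hν0 : ∀ s a, 0 ≤ ν s a) (hν1 : ∑ s, ∑ a, ν s a = 1)
    (f : S → A → ℝ) (w : EuclideanSpace ℝ (Fin d)) (φ : S → A → EuclideanSpace ℝ (Fin d))
    (hφ : ∀ s, ∑ a, π s a • φ s a = 0)
    (g : S → A → ℝ)
    (hg : ∀ s a, g s a = (∑ a', π s a' * f s a') + (inner ℝ w (φ s a) : ℝ))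
    (Δw Δoff : ℝ)
    (h1 : ∑ s, ∑ a, ν s a *
        ((inner ℝ w (φ s a) : ℝ) - f s a + ∑ a', π s a' * f s a') ^ 2 ≤ Δw)
    (h2 : ∑ s, ∑ a, ν s a * (f s a - M.bellman π f s a) ^ 2 ≤ Δoff) :
    ∑ s, ∑ a, ν s a * (g s a - M.bellman π g s a) ^ 2 ≤ 2 * Δw + 2 * Δoff := by
  have hsum : ∀ s', ∑ a', π s' a' * g s' a' = ∑ a', π s' a' * f s' a' := by
    intro s'
    have h0 : ∑ a', π s' a' * (inner ℝ w (φ s' a') : ℝ) = 0 := by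
      have : (inner ℝ w (∑ a', π s' a' • φ s' a') : ℝ) = 0 := by
        rw [hφ s', inner_zero_right]
      rw [inner_sum] at this
      calc ∑ a', π s' a' * (inner ℝ w (φ s' a') : ℝ)
          = ∑ a', (inner ℝ w (π s' a' • φ s' a') : ℝ) :=
            Finset.sum_congr rfl fun a _ => (real_inner_smul_right _ _ _).symm
        _ = 0 := this
    have hexp : ∑ a', π s' a' * g s' a'
        = (∑ a', π s' a') * (∑ a'', π s' a'' * f s' a'')
          + ∑ a', π s' a' * (inner ℝ w (φ s' a') : ℝ) := by
      rw [Finset.sum_mul, ← Finset.sum_add_distrib]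
      exact Finset.sum_congr rfl fun a _ => by rw [hg]; ring
    rw [hexp, h0, hπ.2 s', one_mul, add_zero]
  have hbel : ∀ s a, M.bellman π g s a = M.bellman π f s a := by
    intro s a
    unfold FinMDP.bellman
    congr 2
    exact Finset.sum_congr rfl fun s' _ => by rw [hsum s']
  have key : ∀ s a, ν s a * (g s a - M.bellman π g s a) ^ 2 ≤
      2 * (ν s a * ((inner ℝ w (φ s a) : ℝ) - f s a + ∑ a', π s a' * f s a') ^ 2)
      + 2 * (ν s a * (f s a - M.bellman π f s a) ^ 2) := by
    intro s a
    rw [hbel s a, hg s a]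
    nlinarith [mul_nonneg (hν0 s a)
      (sq_nonneg (((inner ℝ w (φ s a) : ℝ) - f s a + ∑ a', π s a' * f s a')
        - (f s a - M.bellman π f s a)))]
  calc ∑ s, ∑ a, ν s a * (g s a - M.bellman π g s a) ^ 2
      ≤ ∑ s, ∑ a, (2 * (ν s a * ((inner ℝ w (φ s a) : ℝ) - f s a + ∑ a', π s a' * f s a') ^ 2)
          + 2 * (ν s a * (f s a - M.bellman π f s a) ^ 2)) :=
        Finset.sum_le_sum fun s _ => Finset.sum_le_sum fun a _ => key s a
    _ = 2 * (∑ s, ∑ a, ν s a * ((inner ℝ w (φ s a) : ℝ) - f s a + ∑ a', π s a' * f s a') ^ 2)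
          + 2 * (∑ s, ∑ a, ν s a * (f s a - M.bellman π f s a) ^ 2) := by
        simp [Finset.sum_add_distrib, Finset.mul_sum]
    _ ≤ 2 * Δw + 2 * Δoff := by linarith
end

section
/- Advantage approximation bound for the compatible linear critic: Let π be a policy of a finite discounted MDP, f : S×A → ℝ, w ∈ ℝ^d, and φ : S×A → ℝ^d with Σ_a π(a|s)·φ(s,a) = 0 for every s. Define g(s,a) = E_{a'∼π(·|s)}[f(s,a')] + ⟨w, φ(s,a)⟩ and ḡ(s,a) = g(s,a) − E_{a'∼π(·|s)}[g(s,a')]. Then E_{(s,a)∼d^π}[(ḡ(s,a) − A^π(s,a))²] ≤ 8·E_{(s,a)∼d^π}[(⟨w, φ(s,a)⟩ − f(s,a) + E_{a'∼π(·|s)}[f(s,a')])²] + 8·E_{(s,a)∼d^π}[(f(s,a) − Q^π(s,a))²]. -/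
open Finset

variable {S A : Type*} [Fintype S] [Fintype A] [Nonempty S] [Nonempty A]

/-- Advantage approximation bound for the compatible linear critic. -/
theorem stmt19 {d : ℕ} (M : FinMDP S A) (π Q : S → A → ℝ)
    (hπ : IsPolicy π) (hQ : M.IsQ π Q)
    (f : S → A → ℝ) (w : EuclideanSpace ℝ (Fin d)) (φ : S → A → EuclideanSpace ℝ (Fin d))
    (hφ : ∀ s, ∑ a, π s a • φ s a = 0)
    (g gbar : S → A → ℝ)
    (hg : ∀ s a, g s a = (∑ a', π s a' * f s a') + (inner ℝ w (φ s a) : ℝ))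
    (hgbar : ∀ s a, gbar s a = g s a - ∑ a', π s a' * g s a') :
    ∑ s, ∑ a, M.occ π s a * (gbar s a - (Q s a - vOf π Q s)) ^ 2
      ≤ 8 * (∑ s, ∑ a, M.occ π s a *
            ((inner ℝ w (φ s a) : ℝ) - f s a + ∑ a', π s a' * f s a') ^ 2)
        + 8 * ∑ s, ∑ a, M.occ π s a * (f s a - Q s a) ^ 2 := by
  obtain ⟨hπ0, hπ1⟩ := hπ
  -- nonnegativity of state distributions
  have hdist : ∀ t s, 0 ≤ M.stateDist π t s := by
    intro t
    induction t with
    | zero => exact M.init_nonneg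
    | succ t ih =>
      intro s'
      exact Finset.sum_nonneg fun s _ => Finset.sum_nonneg fun a _ =>
        mul_nonneg (mul_nonneg (ih s) (hπ0 s a)) (M.P_nonneg s a s')
  -- factorization of the occupancy measure
  set D : S → ℝ := fun s => (1 - M.disc) * ∑' t : ℕ, M.disc ^ t * M.stateDist π t s with hD
  have hocc : ∀ s a, M.occ π s a = D s * π s a := by
    intro s a
    unfold FinMDP.occ
    rw [hD]
    rw [tsum_mul_right]
    ring
  have hDnn : ∀ s, 0 ≤ D s := by
    intro s
    refine mul_nonneg (by linarith [M.disc_lt_one]) (tsum_nonneg fun t => ?_)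
    exact mul_nonneg (pow_nonneg M.disc_pos.le t) (hdist t s)
  have hoccnn : ∀ s a, 0 ≤ M.occ π s a := fun s a =>
    (hocc s a) ▸ mul_nonneg (hDnn s) (hπ0 s a)
  -- error terms
  set E1 : S → A → ℝ := fun s a => (inner ℝ w (φ s a) : ℝ) - f s a + ∑ a', π s a' * f s a' with hE1
  set E2 : S → A → ℝ := fun s a => f s a - Q s a with hE2
  set c : S → ℝ := fun s => ∑ a, π s a * (E1 s a + E2 s a) with hc
  -- inner products with the compatible features average to zero
  have hin : ∀ s, ∑ a, π s a * (inner ℝ w (φ s a) : ℝ) = 0 := by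
    intro s
    calc ∑ a, π s a * (inner ℝ w (φ s a) : ℝ)
        = ∑ a, (inner ℝ w (π s a • φ s a) : ℝ) := by
          refine Finset.sum_congr rfl fun a _ => ?_
          rw [real_inner_smul_right]
      _ = (inner ℝ w (∑ a, π s a • φ s a) : ℝ) := (inner_sum _ _ _).symm
      _ = 0 := by rw [hφ s, inner_zero_right]
  -- the key pointwise identity
  have hkey : ∀ s a, gbar s a - (Q s a - vOf π Q s) = (E1 s a + E2 s a) - c s := by
    intro s a
    have hcs : c s = (∑ a', π s a' * f s a') - vOf π Q s := by
      rw [hc]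
      calc ∑ a, π s a * (E1 s a + E2 s a)
          = ∑ a, (π s a * (inner ℝ w (φ s a) : ℝ)
              + π s a * (∑ a', π s a' * f s a') - π s a * Q s a) := by
            refine Finset.sum_congr rfl fun a _ => ?_
            rw [hE1, hE2]; ring
        _ = (∑ a, π s a * (inner ℝ w (φ s a) : ℝ))
              + (∑ a, π s a) * (∑ a', π s a' * f s a') - ∑ a, π s a * Q s a := by
            rw [Finset.sum_sub_distrib, Finset.sum_add_distrib, ← Finset.sum_mul]
        _ = (∑ a', π s a' * f s a') - vOf π Q s := by
            rw [hin s, hπ1 s, vOf]; ring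
    have hgb : gbar s a = (inner ℝ w (φ s a) : ℝ) := by
      rw [hgbar]
      have hsg : ∑ a', π s a' * g s a' = ∑ a', π s a' * f s a' := by
        calc ∑ a', π s a' * g s a'
            = ∑ a', (π s a' * (∑ a'', π s a'' * f s a'')
                + π s a' * (inner ℝ w (φ s a') : ℝ)) := by
              refine Finset.sum_congr rfl fun a' _ => ?_
              rw [hg]; ring
          _ = (∑ a', π s a') * (∑ a'', π s a'' * f s a'')
                + ∑ a', π s a' * (inner ℝ w (φ s a') : ℝ) := by
              rw [Finset.sum_add_distrib, ← Finset.sum_mul]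
          _ = ∑ a', π s a' * f s a' := by rw [hπ1 s, hin s]; ring
      rw [hsg, hg]; ring
    rw [hgb, hcs, hE1, hE2]; ring
  -- Cauchy–Schwarz (Jensen) step
  have step2 : ∀ s, (c s) ^ 2 ≤ ∑ a, π s a * (E1 s a + E2 s a) ^ 2 := by
    intro s
    have hCS := Finset.sum_mul_sq_le_sq_mul_sq Finset.univ
      (fun a => Real.sqrt (π s a)) (fun a => Real.sqrt (π s a) * (E1 s a + E2 s a))
    have h1 : ∀ a : A, Real.sqrt (π s a) * (Real.sqrt (π s a) * (E1 s a + E2 s a))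
        = π s a * (E1 s a + E2 s a) := by
      intro a; rw [← mul_assoc, Real.mul_self_sqrt (hπ0 s a)]
    have h2 : ∀ a : A, (Real.sqrt (π s a)) ^ 2 = π s a := fun a => Real.sq_sqrt (hπ0 s a)
    have h3 : ∀ a : A, (Real.sqrt (π s a) * (E1 s a + E2 s a)) ^ 2
        = π s a * (E1 s a + E2 s a) ^ 2 := by
      intro a; rw [mul_pow, h2 a]
    simp only [h1, h2, h3] at hCS
    calc (c s) ^ 2 = (∑ a, π s a * (E1 s a + E2 s a)) ^ 2 := by rw [hc]
      _ ≤ (∑ a : A, π s a) * ∑ a, π s a * (E1 s a + E2 s a) ^ 2 := hCS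
      _ = ∑ a, π s a * (E1 s a + E2 s a) ^ 2 := by rw [hπ1 s, one_mul]
  -- main chain of inequalities
  have chain1 : ∑ s, ∑ a, M.occ π s a * (gbar s a - (Q s a - vOf π Q s)) ^ 2
      ≤ ∑ s, ∑ a, M.occ π s a * (2 * (E1 s a + E2 s a) ^ 2 + 2 * (c s) ^ 2) := by
    refine Finset.sum_le_sum fun s _ => Finset.sum_le_sum fun a _ => ?_
    refine mul_le_mul_of_nonneg_left ?_ (hoccnn s a)
    rw [hkey s a]
    nlinarith [sq_nonneg (E1 s a + E2 s a + c s)]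
  have chain2 : ∑ s, ∑ a, M.occ π s a * (c s) ^ 2
      ≤ ∑ s, ∑ a, M.occ π s a * (E1 s a + E2 s a) ^ 2 := by
    refine Finset.sum_le_sum fun s _ => ?_
    calc ∑ a, M.occ π s a * (c s) ^ 2
        = D s * (c s) ^ 2 := by
          simp only [hocc]
          rw [← Finset.sum_mul]
          rw [show (∑ a, D s * π s a) = D s * ∑ a, π s a by rw [Finset.mul_sum], hπ1 s]
          ring
      _ ≤ D s * ∑ a, π s a * (E1 s a + E2 s a) ^ 2 :=
          mul_le_mul_of_nonneg_left (step2 s) (hDnn s)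
      _ = ∑ a, M.occ π s a * (E1 s a + E2 s a) ^ 2 := by
          rw [Finset.mul_sum]
          refine Finset.sum_congr rfl fun a _ => ?_
          rw [hocc]; ring
  have chain3 : ∑ s, ∑ a, M.occ π s a * (E1 s a + E2 s a) ^ 2
      ≤ (∑ s, ∑ a, M.occ π s a * (2 * (E1 s a) ^ 2 + 2 * (E2 s a) ^ 2)) := by
    refine Finset.sum_le_sum fun s _ => Finset.sum_le_sum fun a _ => ?_
    refine mul_le_mul_of_nonneg_left ?_ (hoccnn s a)
    nlinarith [sq_nonneg (E1 s a - E2 s a)]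
  have expand : ∀ (k : ℝ) (F G : S → A → ℝ),
      ∑ s, ∑ a, M.occ π s a * (k * F s a + k * G s a)
        = k * (∑ s, ∑ a, M.occ π s a * F s a) + k * ∑ s, ∑ a, M.occ π s a * G s a := by
    intro k F G
    rw [Finset.mul_sum, Finset.mul_sum, ← Finset.sum_add_distrib]
    refine Finset.sum_congr rfl fun s _ => ?_
    rw [Finset.mul_sum, Finset.mul_sum, ← Finset.sum_add_distrib]
    refine Finset.sum_congr rfl fun a _ => ?_
    ring
  have final := le_trans chain1 (by
    rw [expand 2 (fun s a => (E1 s a + E2 s a) ^ 2) (fun s a => (c s) ^ 2)]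
    have := le_trans chain2 chain3
    have h3' := chain3
    rw [expand 2 (fun s a => (E1 s a) ^ 2) (fun s a => (E2 s a) ^ 2)] at h3' this
    linarith : ∑ s, ∑ a, M.occ π s a * (2 * (E1 s a + E2 s a) ^ 2 + 2 * (c s) ^ 2)
      ≤ 8 * (∑ s, ∑ a, M.occ π s a * (E1 s a) ^ 2)
        + 8 * ∑ s, ∑ a, M.occ π s a * (E2 s a) ^ 2)
  exact final
end
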